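/- arXiv:2102.00557 — 4 statements merged into one kernel-verified Lean document; each statement's English description precedes it below -/
import Mathlib

section
/- Let Ω ⊂ ℝ^N be an open set, q ≥ 1, u ∈ L^q(Ω, ℝ^m), and t₁, t₂ > 0. Let G ⊂ Ω be open such that either G is convex or t₁ < dist(G, ℝ^N \ Ω). Then ∫_{S^{N-1}} ∫_G (1/(t₁+t₂)^q) |u(x+(t₁+t₂)n) − u(x)|^q χ_G(x+(t₁+t₂)n) dx dH^{N-1}(n) ≤ (t₂/(t₁+t₂)) ∫_{S^{N-1}} ∫_Ω |u(x+t₂n)−u(x)|^q/t₂^q · χ_Ω(x+t₂n) dx dH^{N-1}(n) + (t₁/(t₁+t₂)) ∫_{S^{N-1}} ∫_Ω |u(x+t₁n)−u(x)|^q/t₁^q · χ_Ω(x+t₁n) dx dH^{N-1}(n). -/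
open MeasureTheory Metric Set Filter ENNReal
open scoped Topology

noncomputable section

private lemma aux_convex_stmt10 {q t₁ t₂ A B : ℝ} (hq : 1 ≤ q) (ht₁ : 0 < t₁) (ht₂ : 0 < t₂)
    (hA : 0 ≤ A) (hB : 0 ≤ B) :
    ((A + B) / (t₁ + t₂)) ^ q ≤
      (t₂ / (t₁ + t₂)) * (B / t₂) ^ q + (t₁ / (t₁ + t₂)) * (A / t₁) ^ q := by
  have hh : 0 < t₁ + t₂ := by linarith
  have h := (convexOn_rpow hq).2 (mem_Ici.2 (div_nonneg hB ht₂.le))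
    (mem_Ici.2 (div_nonneg hA ht₁.le)) (div_nonneg ht₂.le hh.le) (div_nonneg ht₁.le hh.le)
    (by field_simp; ring)
  simp only [smul_eq_mul] at h
  have key : (t₂ / (t₁ + t₂)) * (B / t₂) + (t₁ / (t₁ + t₂)) * (A / t₁) = (A + B) / (t₁ + t₂) := by
    field_simp; ring
  rwa [key] at h

set_option maxHeartbeats 1000000 in
/-- splitting inequality for the spherical difference quotients at scale
`t₁ + t₂` in terms of those at scales `t₁` and `t₂`, for `G ⊆ Ω` open which is either
convex or satisfies `t₁ < dist(G, ℝ^N ∖ Ω)`. -/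
theorem stmt_10 (N m : ℕ) (Ω : Set (EuclideanSpace ℝ (Fin N))) (hΩopen : IsOpen Ω)
    (q : ℝ) (hq : 1 ≤ q)
    (u : EuclideanSpace ℝ (Fin N) → EuclideanSpace ℝ (Fin m))
    (hu : MemLp u (ENNReal.ofReal q) (volume.restrict Ω))
    (t₁ t₂ : ℝ) (ht₁ : 0 < t₁) (ht₂ : 0 < t₂)
    (G : Set (EuclideanSpace ℝ (Fin N))) (hGopen : IsOpen G) (hGΩ : G ⊆ Ω)
    (hG : Convex ℝ G ∨
      ENNReal.ofReal t₁ < ⨅ x ∈ G, EMetric.infEdist x Ωᶜ) :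
    (∫⁻ n in sphere (0 : EuclideanSpace ℝ (Fin N)) 1,
        (∫⁻ x in G,
          (G.indicator (fun _ => (1 : ℝ≥0∞)) (x + (t₁ + t₂) • n)) *
            ENNReal.ofReal (‖u (x + (t₁ + t₂) • n) - u x‖ ^ q / (t₁ + t₂) ^ q))
        ∂(μH[(N : ℝ) - 1])) ≤
      ENNReal.ofReal (t₂ / (t₁ + t₂)) *
        (∫⁻ n in sphere (0 : EuclideanSpace ℝ (Fin N)) 1,
          (∫⁻ x in Ω,
            (Ω.indicator (fun _ => (1 : ℝ≥0∞)) (x + t₂ • n)) *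
              ENNReal.ofReal (‖u (x + t₂ • n) - u x‖ ^ q / t₂ ^ q))
          ∂(μH[(N : ℝ) - 1])) +
      ENNReal.ofReal (t₁ / (t₁ + t₂)) *
        (∫⁻ n in sphere (0 : EuclideanSpace ℝ (Fin N)) 1,
          (∫⁻ x in Ω,
            (Ω.indicator (fun _ => (1 : ℝ≥0∞)) (x + t₁ • n)) *
              ENNReal.ofReal (‖u (x + t₁ • n) - u x‖ ^ q / t₁ ^ q))
          ∂(μH[(N : ℝ) - 1])) := by
  classical
  obtain ⟨v, hv_sm, huv⟩ := hu.1
  have hvm : Measurable v := hv_sm.measurable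
  have hΩm := hΩopen.measurableSet
  have hGm := hGopen.measurableSet
  have hT : 0 < t₁ + t₂ := by linarith
  -- the set inside Ω where u and v differ is null
  have hnull : volume {x : EuclideanSpace ℝ (Fin N) | x ∈ Ω ∧ u x ≠ v x} = 0 := by
    have h1 : ∀ᵐ x, x ∈ Ω → u x = v x := (ae_restrict_iff' hΩm).1 huv
    rw [ae_iff] at h1
    have hset : {x : EuclideanSpace ℝ (Fin N) | x ∈ Ω ∧ u x ≠ v x}
        = {x | ¬(x ∈ Ω → u x = v x)} := by
      ext x; simp [Classical.not_imp]
    rw [hset]; exact h1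
  -- replacing u by v does not change the inner integrals
  have hcongr : ∀ (a : EuclideanSpace ℝ (Fin N)) (c : ℝ) (S T : Set (EuclideanSpace ℝ (Fin N))),
      MeasurableSet S → S ⊆ Ω → T ⊆ Ω →
      (∫⁻ x in S, (T.indicator (fun _ => (1 : ℝ≥0∞)) (x + a)) *
          ENNReal.ofReal (‖u (x + a) - u x‖ ^ q / c))
        = ∫⁻ x in S, (T.indicator (fun _ => (1 : ℝ≥0∞)) (x + a)) *
          ENNReal.ofReal (‖v (x + a) - v x‖ ^ q / c) := by
    intro a c S T hSm hSΩ hTΩ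
    apply lintegral_congr_ae
    have hb1 : ∀ᵐ x ∂(volume.restrict S), ¬(x ∈ Ω ∧ u x ≠ v x) := by
      refine ae_restrict_of_ae ?_
      rw [ae_iff]
      simpa [not_not] using hnull
    have hb2 : ∀ᵐ x ∂(volume.restrict S), ¬(x + a ∈ Ω ∧ u (x + a) ≠ v (x + a)) := by
      refine ae_restrict_of_ae ?_
      rw [ae_iff]
      have hset : {x : EuclideanSpace ℝ (Fin N) | ¬¬(x + a ∈ Ω ∧ u (x + a) ≠ v (x + a))}
          = (fun x => x + a) ⁻¹' {y | y ∈ Ω ∧ u y ≠ v y} := by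
        ext x; simp [not_not]
      rw [hset, measure_preimage_add_right]
      exact hnull
    filter_upwards [hb1, hb2, ae_restrict_mem hSm] with x hx1 hx2 hxS
    by_cases hTmem : x + a ∈ T
    · have hu1 : u x = v x := by
        by_contra hne; exact hx1 ⟨hSΩ hxS, hne⟩
      have hu2 : u (x + a) = v (x + a) := by
        by_contra hne; exact hx2 ⟨hTΩ hTmem, hne⟩
      rw [hu1, hu2]
    · simp [Set.indicator_of_notMem hTmem]
  -- measurability of the inner integrands (for v)
  have hmf : ∀ (t : ℝ) (n : EuclideanSpace ℝ (Fin N)),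
      Measurable fun x : EuclideanSpace ℝ (Fin N) =>
        (Ω.indicator (fun _ => (1 : ℝ≥0∞)) (x + t • n)) *
          ENNReal.ofReal (‖v (x + t • n) - v x‖ ^ q / t ^ q) := by
    intro t n
    have hg : Measurable fun x : EuclideanSpace ℝ (Fin N) => x + t • n :=
      measurable_id.add_const _
    refine ((measurable_const.indicator hΩm).comp hg).mul ?_
    have : Measurable fun x : EuclideanSpace ℝ (Fin N) =>
        ‖v (x + t • n) - v x‖ ^ q / t ^ q := by fun_prop
    exact this.ennreal_ofReal
  -- the key per-direction estimate for v
  have key : ∀ n ∈ sphere (0 : EuclideanSpace ℝ (Fin N)) 1,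
      (∫⁻ x in G, (G.indicator (fun _ => (1 : ℝ≥0∞)) (x + (t₁ + t₂) • n)) *
          ENNReal.ofReal (‖v (x + (t₁ + t₂) • n) - v x‖ ^ q / (t₁ + t₂) ^ q))
        ≤ ENNReal.ofReal (t₂ / (t₁ + t₂)) *
            (∫⁻ x in Ω, (Ω.indicator (fun _ => (1 : ℝ≥0∞)) (x + t₂ • n)) *
              ENNReal.ofReal (‖v (x + t₂ • n) - v x‖ ^ q / t₂ ^ q)) +
          ENNReal.ofReal (t₁ / (t₁ + t₂)) *
            (∫⁻ x in Ω, (Ω.indicator (fun _ => (1 : ℝ≥0∞)) (x + t₁ • n)) *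
              ENNReal.ofReal (‖v (x + t₁ • n) - v x‖ ^ q / t₁ ^ q)) := by
    intro n hn
    have hn1 : ‖n‖ = 1 := by simpa using hn
    set f₁ : EuclideanSpace ℝ (Fin N) → ℝ≥0∞ := fun y =>
      (Ω.indicator (fun _ => (1 : ℝ≥0∞)) (y + t₁ • n)) *
        ENNReal.ofReal (‖v (y + t₁ • n) - v y‖ ^ q / t₁ ^ q) with hf₁
    set f₂ : EuclideanSpace ℝ (Fin N) → ℝ≥0∞ := fun y =>
      (Ω.indicator (fun _ => (1 : ℝ≥0∞)) (y + t₂ • n)) *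
        ENNReal.ofReal (‖v (y + t₂ • n) - v y‖ ^ q / t₂ ^ q) with hf₂
    -- geometric step: the intermediate point lies in Ω
    have hmem : ∀ x ∈ G, x + (t₁ + t₂) • n ∈ G → x + t₂ • n ∈ Ω := by
      intro x hx hx2
      rcases hG with hconv | hdist
      · refine hGΩ ?_
        have h1 : (t₁ / (t₁ + t₂)) • x + (t₂ / (t₁ + t₂)) • (x + (t₁ + t₂) • n)
            = x + t₂ • n := by
          match_scalars <;> field_simp
        rw [← h1]
        exact hconv hx hx2 (div_nonneg ht₁.le hT.le) (div_nonneg ht₂.le hT.le)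
          (by field_simp)
      · by_contra hc
        have h1 : (⨅ y ∈ G, EMetric.infEdist y Ωᶜ)
            ≤ EMetric.infEdist (x + (t₁ + t₂) • n) Ωᶜ := iInf₂_le _ hx2
        have hd : dist (x + (t₁ + t₂) • n) (x + t₂ • n) = t₁ := by
          rw [dist_add_left, dist_eq_norm, ← sub_smul, norm_smul, Real.norm_eq_abs]
          have he : t₁ + t₂ - t₂ = t₁ := by ring
          rw [he, abs_of_pos ht₁, hn1, mul_one]
        have h2 : EMetric.infEdist (x + (t₁ + t₂) • n) Ωᶜ ≤ ENNReal.ofReal t₁ := by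
          have h3 := EMetric.infEdist_le_edist_of_mem
            (x := x + (t₁ + t₂) • n) (y := x + t₂ • n) (s := Ωᶜ) hc
          rwa [edist_dist, hd] at h3
        exact absurd (hdist.trans_le (h1.trans h2)) (lt_irrefl _)
    -- pointwise estimate on G
    have hpt : ∀ x ∈ G,
        (G.indicator (fun _ => (1 : ℝ≥0∞)) (x + (t₁ + t₂) • n)) *
          ENNReal.ofReal (‖v (x + (t₁ + t₂) • n) - v x‖ ^ q / (t₁ + t₂) ^ q)
        ≤ ENNReal.ofReal (t₂ / (t₁ + t₂)) * f₂ x +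
          ENNReal.ofReal (t₁ / (t₁ + t₂)) *
            ((Ω.indicator (fun _ => (1 : ℝ≥0∞)) (x + t₂ • n)) * f₁ (x + t₂ • n)) := by
      intro x hx
      by_cases hxg : x + (t₁ + t₂) • n ∈ G
      · have hΩ2 : x + t₂ • n ∈ Ω := hmem x hx hxg
        have hΩh : x + (t₁ + t₂) • n ∈ Ω := hGΩ hxg
        have harg : x + t₂ • n + t₁ • n = x + (t₁ + t₂) • n := by module
        rw [hf₁, hf₂]
        simp only [harg, Set.indicator_of_mem hxg, Set.indicator_of_mem hΩ2,
          Set.indicator_of_mem hΩh, one_mul]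
        rw [← ENNReal.ofReal_mul (div_nonneg ht₂.le hT.le),
            ← ENNReal.ofReal_mul (div_nonneg ht₁.le hT.le),
            ← ENNReal.ofReal_add (by positivity) (by positivity)]
        apply ENNReal.ofReal_le_ofReal
        have hq0 : 0 ≤ q := le_trans zero_le_one hq
        have hab : v (x + (t₁ + t₂) • n) - v x
            = (v (x + (t₁ + t₂) • n) - v (x + t₂ • n)) + (v (x + t₂ • n) - v x) := by abel
        calc ‖v (x + (t₁ + t₂) • n) - v x‖ ^ q / (t₁ + t₂) ^ q
            = (‖v (x + (t₁ + t₂) • n) - v x‖ / (t₁ + t₂)) ^ q := by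
              rw [Real.div_rpow (norm_nonneg _) hT.le]
          _ ≤ ((‖v (x + (t₁ + t₂) • n) - v (x + t₂ • n)‖ + ‖v (x + t₂ • n) - v x‖)
                / (t₁ + t₂)) ^ q := by
              have hq0' : 0 ≤ q := le_trans zero_le_one hq
              refine Real.rpow_le_rpow (by positivity) ?_ hq0'
              gcongr
              exact hab ▸ norm_add_le _ _
          _ ≤ (t₂ / (t₁ + t₂)) * (‖v (x + t₂ • n) - v x‖ / t₂) ^ q +
              (t₁ / (t₁ + t₂)) * (‖v (x + (t₁ + t₂) • n) - v (x + t₂ • n)‖ / t₁) ^ q :=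
            aux_convex_stmt10 hq ht₁ ht₂ (norm_nonneg _) (norm_nonneg _)
          _ = (t₂ / (t₁ + t₂)) * (‖v (x + t₂ • n) - v x‖ ^ q / t₂ ^ q) +
              (t₁ / (t₁ + t₂)) * (‖v (x + (t₁ + t₂) • n) - v (x + t₂ • n)‖ ^ q / t₁ ^ q) := by
            rw [Real.div_rpow (norm_nonneg _) ht₂.le, Real.div_rpow (norm_nonneg _) ht₁.le]
      · simp [Set.indicator_of_notMem hxg]
    -- integrate the pointwise estimate
    have hstep : (∫⁻ x in G,
        (Ω.indicator (fun _ => (1 : ℝ≥0∞)) (x + t₂ • n)) * f₁ (x + t₂ • n)) ≤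
        ∫⁻ y in Ω, f₁ y := by
      calc (∫⁻ x in G, (Ω.indicator (fun _ => (1 : ℝ≥0∞)) (x + t₂ • n)) * f₁ (x + t₂ • n))
          ≤ ∫⁻ x, (Ω.indicator (fun _ => (1 : ℝ≥0∞)) (x + t₂ • n)) * f₁ (x + t₂ • n) :=
            setLIntegral_le_lintegral _ _
        _ = ∫⁻ x, (Ω.indicator f₁) (x + t₂ • n) := by
            apply lintegral_congr; intro x
            by_cases hx : x + t₂ • n ∈ Ω <;>
              simp [Set.indicator_of_mem, Set.indicator_of_notMem, hx]
        _ = ∫⁻ y, Ω.indicator f₁ y := lintegral_add_right_eq_self _ _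
        _ = ∫⁻ y in Ω, f₁ y := lintegral_indicator hΩm f₁
    calc (∫⁻ x in G, (G.indicator (fun _ => (1 : ℝ≥0∞)) (x + (t₁ + t₂) • n)) *
          ENNReal.ofReal (‖v (x + (t₁ + t₂) • n) - v x‖ ^ q / (t₁ + t₂) ^ q))
        ≤ ∫⁻ x in G, (ENNReal.ofReal (t₂ / (t₁ + t₂)) * f₂ x +
            ENNReal.ofReal (t₁ / (t₁ + t₂)) *
              ((Ω.indicator (fun _ => (1 : ℝ≥0∞)) (x + t₂ • n)) * f₁ (x + t₂ • n))) :=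
          lintegral_mono_ae ((ae_restrict_iff' hGm).2 (ae_of_all _ hpt))
      _ = (∫⁻ x in G, ENNReal.ofReal (t₂ / (t₁ + t₂)) * f₂ x) +
          ∫⁻ x in G, ENNReal.ofReal (t₁ / (t₁ + t₂)) *
            ((Ω.indicator (fun _ => (1 : ℝ≥0∞)) (x + t₂ • n)) * f₁ (x + t₂ • n)) := by
          refine lintegral_add_left ?_ _
          exact (hmf t₂ n).const_mul _
      _ = ENNReal.ofReal (t₂ / (t₁ + t₂)) * (∫⁻ x in G, f₂ x) +
          ENNReal.ofReal (t₁ / (t₁ + t₂)) *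
            ∫⁻ x in G, (Ω.indicator (fun _ => (1 : ℝ≥0∞)) (x + t₂ • n)) * f₁ (x + t₂ • n) := by
          rw [lintegral_const_mul' _ _ ofReal_ne_top, lintegral_const_mul' _ _ ofReal_ne_top]
      _ ≤ ENNReal.ofReal (t₂ / (t₁ + t₂)) * (∫⁻ x in Ω, f₂ x) +
          ENNReal.ofReal (t₁ / (t₁ + t₂)) * ∫⁻ y in Ω, f₁ y :=
          add_le_add (mul_le_mul_right (lintegral_mono_set hGΩ) _)
            (mul_le_mul_right hstep _)
  -- measurability of the inner integrals as functions of n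
  have hI : ∀ (t : ℝ), Measurable fun n : EuclideanSpace ℝ (Fin N) =>
      ∫⁻ x in Ω, (Ω.indicator (fun _ => (1 : ℝ≥0∞)) (x + t • n)) *
        ENNReal.ofReal (‖v (x + t • n) - v x‖ ^ q / t ^ q) := by
    intro t
    have hg : Measurable fun p : EuclideanSpace ℝ (Fin N) × EuclideanSpace ℝ (Fin N) =>
        p.2 + t • p.1 := measurable_snd.add (measurable_fst.const_smul t)
    have hr : Measurable fun p : EuclideanSpace ℝ (Fin N) × EuclideanSpace ℝ (Fin N) =>
        ‖v (p.2 + t • p.1) - v p.2‖ ^ q / t ^ q := by fun_prop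
    have hjoint : Measurable fun p : EuclideanSpace ℝ (Fin N) × EuclideanSpace ℝ (Fin N) =>
        (Ω.indicator (fun _ => (1 : ℝ≥0∞)) (p.2 + t • p.1)) *
          ENNReal.ofReal (‖v (p.2 + t • p.1) - v p.2‖ ^ q / t ^ q) :=
      ((measurable_const.indicator hΩm).comp hg).mul hr.ennreal_ofReal
    exact hjoint.lintegral_prod_right'
  have hsm : MeasurableSet (sphere (0 : EuclideanSpace ℝ (Fin N)) 1) :=
    isClosed_sphere.measurableSet
  calc (∫⁻ n in sphere (0 : EuclideanSpace ℝ (Fin N)) 1,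
        (∫⁻ x in G, (G.indicator (fun _ => (1 : ℝ≥0∞)) (x + (t₁ + t₂) • n)) *
          ENNReal.ofReal (‖u (x + (t₁ + t₂) • n) - u x‖ ^ q / (t₁ + t₂) ^ q))
        ∂(μH[(N : ℝ) - 1]))
      = ∫⁻ n in sphere (0 : EuclideanSpace ℝ (Fin N)) 1,
        (∫⁻ x in G, (G.indicator (fun _ => (1 : ℝ≥0∞)) (x + (t₁ + t₂) • n)) *
          ENNReal.ofReal (‖v (x + (t₁ + t₂) • n) - v x‖ ^ q / (t₁ + t₂) ^ q))
        ∂(μH[(N : ℝ) - 1]) :=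
        lintegral_congr fun n => hcongr ((t₁ + t₂) • n) _ G G hGm hGΩ hGΩ
    _ ≤ ∫⁻ n in sphere (0 : EuclideanSpace ℝ (Fin N)) 1,
        (ENNReal.ofReal (t₂ / (t₁ + t₂)) *
          (∫⁻ x in Ω, (Ω.indicator (fun _ => (1 : ℝ≥0∞)) (x + t₂ • n)) *
            ENNReal.ofReal (‖v (x + t₂ • n) - v x‖ ^ q / t₂ ^ q)) +
        ENNReal.ofReal (t₁ / (t₁ + t₂)) *
          (∫⁻ x in Ω, (Ω.indicator (fun _ => (1 : ℝ≥0∞)) (x + t₁ • n)) *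
            ENNReal.ofReal (‖v (x + t₁ • n) - v x‖ ^ q / t₁ ^ q))) ∂(μH[(N : ℝ) - 1]) :=
        lintegral_mono_ae ((ae_restrict_iff' hsm).2 (ae_of_all _ key))
    _ = (∫⁻ n in sphere (0 : EuclideanSpace ℝ (Fin N)) 1,
          ENNReal.ofReal (t₂ / (t₁ + t₂)) *
            (∫⁻ x in Ω, (Ω.indicator (fun _ => (1 : ℝ≥0∞)) (x + t₂ • n)) *
              ENNReal.ofReal (‖v (x + t₂ • n) - v x‖ ^ q / t₂ ^ q)) ∂(μH[(N : ℝ) - 1])) +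
        ∫⁻ n in sphere (0 : EuclideanSpace ℝ (Fin N)) 1,
          ENNReal.ofReal (t₁ / (t₁ + t₂)) *
            (∫⁻ x in Ω, (Ω.indicator (fun _ => (1 : ℝ≥0∞)) (x + t₁ • n)) *
              ENNReal.ofReal (‖v (x + t₁ • n) - v x‖ ^ q / t₁ ^ q)) ∂(μH[(N : ℝ) - 1]) :=
        lintegral_add_left ((hI t₂).const_mul _) _
    _ = ENNReal.ofReal (t₂ / (t₁ + t₂)) *
          (∫⁻ n in sphere (0 : EuclideanSpace ℝ (Fin N)) 1,
            (∫⁻ x in Ω, (Ω.indicator (fun _ => (1 : ℝ≥0∞)) (x + t₂ • n)) *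
              ENNReal.ofReal (‖v (x + t₂ • n) - v x‖ ^ q / t₂ ^ q)) ∂(μH[(N : ℝ) - 1])) +
        ENNReal.ofReal (t₁ / (t₁ + t₂)) *
          (∫⁻ n in sphere (0 : EuclideanSpace ℝ (Fin N)) 1,
            (∫⁻ x in Ω, (Ω.indicator (fun _ => (1 : ℝ≥0∞)) (x + t₁ • n)) *
              ENNReal.ofReal (‖v (x + t₁ • n) - v x‖ ^ q / t₁ ^ q)) ∂(μH[(N : ℝ) - 1])) := by
        rw [lintegral_const_mul' _ _ ofReal_ne_top, lintegral_const_mul' _ _ ofReal_ne_top]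
    _ = ENNReal.ofReal (t₂ / (t₁ + t₂)) *
          (∫⁻ n in sphere (0 : EuclideanSpace ℝ (Fin N)) 1,
            (∫⁻ x in Ω, (Ω.indicator (fun _ => (1 : ℝ≥0∞)) (x + t₂ • n)) *
              ENNReal.ofReal (‖u (x + t₂ • n) - u x‖ ^ q / t₂ ^ q)) ∂(μH[(N : ℝ) - 1])) +
        ENNReal.ofReal (t₁ / (t₁ + t₂)) *
          (∫⁻ n in sphere (0 : EuclideanSpace ℝ (Fin N)) 1,
            (∫⁻ x in Ω, (Ω.indicator (fun _ => (1 : ℝ≥0∞)) (x + t₁ • n)) *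
              ENNReal.ofReal (‖u (x + t₁ • n) - u x‖ ^ q / t₁ ^ q)) ∂(μH[(N : ℝ) - 1])) := by
        rw [lintegral_congr fun n => hcongr (t₂ • n) _ Ω Ω hΩm subset_rfl subset_rfl,
            lintegral_congr fun n => hcongr (t₁ • n) _ Ω Ω hΩm subset_rfl subset_rfl]
end
end

section
/- Let Ω ⊂ ℝ^N be an open set, q ≥ 1, u ∈ L^q(Ω, ℝ^m), and t > 0. Let G ⊂ Ω be open with L^N(∂G) = 0 and such that either t < dist(G, ℝ^N \ Ω) or G is convex. Then ∫_{S^{N-1}} ∫_G |u(x+tn)−u(x)|^q/t^q · χ_G(x+tn) dx dH^{N-1}(n) ≤ liminf_{ε→0⁺} ∫_{S^{N-1}} ∫_Ω |u(x+εn)−u(x)|^q/ε^q · χ_Ω(x+εn) dx dH^{N-1}(n). -/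
open MeasureTheory Metric Set Filter ENNReal
open scoped Topology

noncomputable section

namespace SP11

variable {N m : ℕ}

/-- The spherical difference quotient integrand at scale `ε` over set `S`. -/
def Phi (S : Set (EuclideanSpace ℝ (Fin N)))
    (w : EuclideanSpace ℝ (Fin N) → EuclideanSpace ℝ (Fin m))
    (q ε : ℝ) (n : EuclideanSpace ℝ (Fin N)) : ℝ≥0∞ :=
  ∫⁻ x in S, (S.indicator (fun _ => (1 : ℝ≥0∞)) (x + ε • n)) *
      ENNReal.ofReal (‖w (x + ε • n) - w x‖ ^ q / ε ^ q)

/-- indicator rewrite -/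
lemma phi_eq (S : Set (EuclideanSpace ℝ (Fin N))) (hS : MeasurableSet S)
    (w : EuclideanSpace ℝ (Fin N) → EuclideanSpace ℝ (Fin m))
    (q ε : ℝ) (n : EuclideanSpace ℝ (Fin N)) :
    Phi S w q ε n =
      ∫⁻ x in S ∩ (fun y => y + ε • n) ⁻¹' S,
        ENNReal.ofReal (‖w (x + ε • n) - w x‖ ^ q / ε ^ q) := by
  have hpre : MeasurableSet ((fun y => y + ε • n) ⁻¹' S) :=
    hS.preimage (measurable_add_const _)
  have h1 : ∀ x : EuclideanSpace ℝ (Fin N),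
      (S.indicator (fun _ => (1 : ℝ≥0∞)) (x + ε • n)) *
        ENNReal.ofReal (‖w (x + ε • n) - w x‖ ^ q / ε ^ q) =
      ((fun y => y + ε • n) ⁻¹' S).indicator
        (fun x => ENNReal.ofReal (‖w (x + ε • n) - w x‖ ^ q / ε ^ q)) x := by
    intro x
    by_cases h : x + ε • n ∈ S <;>
      simp [Set.indicator_of_mem, Set.indicator_of_notMem, h, Set.mem_preimage]
  unfold Phi
  simp_rw [h1]
  rw [lintegral_indicator hpre, Measure.restrict_restrict hpre, Set.inter_comm]

/-- translation of a set lintegral -/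
lemma lintegral_translate (T : Set (EuclideanSpace ℝ (Fin N))) (hT : MeasurableSet T)
    (H : EuclideanSpace ℝ (Fin N) → ℝ≥0∞) (hH : Measurable H)
    (v : EuclideanSpace ℝ (Fin N)) :
    ∫⁻ x in T, H (x + v) = ∫⁻ y in (fun y => y - v) ⁻¹' T, H y := by
  have hTv : MeasurableSet ((fun y => y - v) ⁻¹' T) :=
    hT.preimage (measurable_sub_const _)
  have mp : MeasurePreserving (fun x : EuclideanSpace ℝ (Fin N) => x + v) volume volume :=
    measurePreserving_add_right volume v
  set K : EuclideanSpace ℝ (Fin N) → ℝ≥0∞ := ((fun y => y - v) ⁻¹' T).indicator H with hK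
  have hKmeas : Measurable K := hH.indicator hTv
  have h1 : ∀ x : EuclideanSpace ℝ (Fin N), T.indicator (fun x => H (x + v)) x = K (x + v) := by
    intro x
    by_cases h : x ∈ T <;>
      simp [hK, Set.indicator_of_mem, Set.indicator_of_notMem, h, Set.mem_preimage,
        add_sub_cancel_right]
  calc ∫⁻ x in T, H (x + v) = ∫⁻ x, T.indicator (fun x => H (x + v)) x := by
        rw [lintegral_indicator hT]
    _ = ∫⁻ x, K (x + v) := by simp_rw [h1]
    _ = ∫⁻ y, K y := mp.lintegral_comp hKmeas
    _ = ∫⁻ y in (fun y => y - v) ⁻¹' T, H y := by rw [hK, lintegral_indicator hTv]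

/-- Jensen-type inequality for real powers. -/
lemma sum_rpow_le (q : ℝ) (hq : 1 ≤ q) (M : ℕ) (hM : 0 < M) (a : ℕ → ℝ)
    (ha : ∀ j, 0 ≤ a j) :
    (∑ j ∈ Finset.range M, a j) ^ q ≤ (M : ℝ) ^ (q - 1) * ∑ j ∈ Finset.range M, a j ^ q := by
  have hM0 : (0 : ℝ) < (M : ℝ) := by exact_mod_cast hM
  have key := Real.rpow_arith_mean_le_arith_mean_rpow (Finset.range M)
    (fun _ => (M : ℝ)⁻¹) a (fun i _ => by positivity)
    (by simp [Finset.sum_const, hM0.ne']) (fun i _ => ha i) hq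
  have h1 : (∑ j ∈ Finset.range M, (M : ℝ)⁻¹ * a j) = (M : ℝ)⁻¹ * ∑ j ∈ Finset.range M, a j := by
    rw [Finset.mul_sum]
  rw [h1] at key
  have h2 : ((M : ℝ)⁻¹ * ∑ j ∈ Finset.range M, a j) ^ q
      = (M : ℝ)⁻¹ ^ q * (∑ j ∈ Finset.range M, a j) ^ q := by
    rw [Real.mul_rpow (by positivity) (Finset.sum_nonneg fun i _ => ha i)]
  have h3 : (∑ j ∈ Finset.range M, (M : ℝ)⁻¹ * a j ^ q)
      = (M : ℝ)⁻¹ * ∑ j ∈ Finset.range M, a j ^ q := by rw [Finset.mul_sum]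
  rw [h2, h3] at key
  have h4 : (0 : ℝ) < (M : ℝ)⁻¹ ^ q := by positivity
  calc (∑ j ∈ Finset.range M, a j) ^ q
      = ((M : ℝ)⁻¹ ^ q)⁻¹ * ((M : ℝ)⁻¹ ^ q * (∑ j ∈ Finset.range M, a j) ^ q) := by
        field_simp
    _ ≤ ((M : ℝ)⁻¹ ^ q)⁻¹ * ((M : ℝ)⁻¹ * ∑ j ∈ Finset.range M, a j ^ q) := by
        exact mul_le_mul_of_nonneg_left key (by positivity)
    _ = (M : ℝ) ^ (q - 1) * ∑ j ∈ Finset.range M, a j ^ q := by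
        rw [Real.rpow_sub hM0, Real.rpow_one, Real.inv_rpow hM0.le, inv_inv]
        ring

lemma chain (Ω G : Set (EuclideanSpace ℝ (Fin N))) (hΩ : MeasurableSet Ω)
    (hGmeas : MeasurableSet G)
    (q : ℝ) (hq : 1 ≤ q)
    (w : EuclideanSpace ℝ (Fin N) → EuclideanSpace ℝ (Fin m)) (hw : Measurable w)
    (t : ℝ) (ht : 0 < t) (n : EuclideanSpace ℝ (Fin N))
    (hdom : ∀ x ∈ G, ∀ s : ℝ, 0 < s → s ≤ t → x + s • n ∈ G →
      ∀ r ∈ Icc (0:ℝ) s, x + r • n ∈ Ω)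
    (ε : ℝ) (hε0 : 0 < ε) (hεt : ε ≤ t) :
    Phi G w q ((⌊t / ε⌋₊ : ℝ) * ε) n ≤ Phi Ω w q ε n := by
  set M : ℕ := ⌊t / ε⌋₊ with hMdef
  have hM1 : 1 ≤ M := Nat.le_floor (by rw [Nat.cast_one, le_div_iff₀ hε0]; linarith)
  have hM0 : (0:ℝ) < M := by exact_mod_cast hM1
  set s : ℝ := (M:ℝ) * ε with hsdef
  have hs0 : 0 < s := by positivity
  have hst : s ≤ t := by
    have h := Nat.floor_le (by positivity : (0:ℝ) ≤ t / ε)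
    have : (M:ℝ) ≤ t / ε := h
    calc (M:ℝ) * ε ≤ (t/ε) * ε := by nlinarith
    _ = t := by field_simp
  set D : Set (EuclideanSpace ℝ (Fin N)) := G ∩ (fun y => y + s • n) ⁻¹' G with hDdef
  have hD : MeasurableSet D := hGmeas.inter (hGmeas.preimage (measurable_add_const _))
  set DΩ : Set (EuclideanSpace ℝ (Fin N)) := Ω ∩ (fun y => y + ε • n) ⁻¹' Ω with hDΩdef
  have hDΩ : MeasurableSet DΩ := hΩ.inter (hΩ.preimage (measurable_add_const _))
  rw [phi_eq G hGmeas, phi_eq Ω hΩ]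
  -- measurable step integrands
  have hwmeas : ∀ v : EuclideanSpace ℝ (Fin N),
      Measurable fun x : EuclideanSpace ℝ (Fin N) =>
        ENNReal.ofReal (‖w (x + v) - w x‖ ^ q) := by
    intro v
    apply ENNReal.measurable_ofReal.comp
    exact ((hw.comp (measurable_add_const v)).sub hw).norm.pow_const q
  set Hε : EuclideanSpace ℝ (Fin N) → ℝ≥0∞ :=
    fun y => ENNReal.ofReal (‖w (y + ε • n) - w y‖ ^ q) with hHdef
  have hHmeas : Measurable Hε := hwmeas (ε • n)
  set c : ℝ := (M:ℝ) ^ (q - 1) / s ^ q with hcdef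
  have hc0 : 0 ≤ c := by positivity
  have hsq : (0:ℝ) < s ^ q := Real.rpow_pos_of_pos hs0 q
  have hεq : (0:ℝ) < ε ^ q := Real.rpow_pos_of_pos hε0 q
  -- pointwise bound
  have hpoint : ∀ x : EuclideanSpace ℝ (Fin N),
      ENNReal.ofReal (‖w (x + s • n) - w x‖ ^ q / s ^ q) ≤
        ENNReal.ofReal (c * ∑ j ∈ Finset.range M,
          ‖w (x + (((j:ℝ)+1) * ε) • n) - w (x + ((j:ℝ) * ε) • n)‖ ^ q) := by
    intro x
    apply ENNReal.ofReal_le_ofReal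
    have tele : w (x + s • n) - w x =
        ∑ j ∈ Finset.range M,
          (w (x + (((j:ℝ)+1) * ε) • n) - w (x + ((j:ℝ) * ε) • n)) := by
      have := Finset.sum_range_sub (f := fun j : ℕ => w (x + ((j:ℝ) * ε) • n)) M
      simp only [Nat.cast_succ] at this
      rw [this]
      norm_num [hsdef]
    have nrm : ‖w (x + s • n) - w x‖ ≤
        ∑ j ∈ Finset.range M, ‖w (x + (((j:ℝ)+1) * ε) • n) - w (x + ((j:ℝ) * ε) • n)‖ := by
      rw [tele]; exact norm_sum_le _ _
    have pow1 : ‖w (x + s • n) - w x‖ ^ q ≤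
        (∑ j ∈ Finset.range M, ‖w (x + (((j:ℝ)+1) * ε) • n) - w (x + ((j:ℝ) * ε) • n)‖) ^ q :=
      Real.rpow_le_rpow (norm_nonneg _) nrm (by linarith)
    have pow2 := sum_rpow_le q hq M hM1
      (fun j => ‖w (x + (((j:ℝ)+1) * ε) • n) - w (x + ((j:ℝ) * ε) • n)‖)
      (fun j => norm_nonneg _)
    calc ‖w (x + s • n) - w x‖ ^ q / s ^ q
        ≤ ((M:ℝ) ^ (q-1) * ∑ j ∈ Finset.range M,
            ‖w (x + (((j:ℝ) + 1) * ε) • n) - w (x + ((j:ℝ) * ε) • n)‖ ^ q) / s ^ q := by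
          gcongr
          exact pow1.trans pow2
      _ = c * ∑ j ∈ Finset.range M,
            ‖w (x + (((j:ℝ) + 1) * ε) • n) - w (x + ((j:ℝ) * ε) • n)‖ ^ q := by
          rw [hcdef]; ring
  have hmeas2 : ∀ v₁ v₂ : EuclideanSpace ℝ (Fin N),
      Measurable fun x : EuclideanSpace ℝ (Fin N) =>
        ENNReal.ofReal (‖w (x + v₂) - w (x + v₁)‖ ^ q) := by
    intro v₁ v₂
    apply ENNReal.measurable_ofReal.comp
    exact ((hw.comp (measurable_add_const v₂)).sub (hw.comp (measurable_add_const v₁))).norm.pow_const q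
  have hshift : ∀ (j : ℕ) (x : EuclideanSpace ℝ (Fin N)),
      x + (((j:ℝ) + 1) * ε) • n = (x + ((j:ℝ) * ε) • n) + ε • n := by
    intro j x
    rw [add_assoc, ← add_smul]
    ring_nf
  have hj : ∀ j ∈ Finset.range M,
      (∫⁻ x in D, ENNReal.ofReal
        (‖w (x + (((j:ℝ) + 1) * ε) • n) - w (x + ((j:ℝ) * ε) • n)‖ ^ q)) ≤
      ∫⁻ y in DΩ, Hε y := by
    intro j hjm
    have hjM : j < M := Finset.mem_range.1 hjm
    have hjε0 : (0:ℝ) ≤ (j:ℝ) * ε := by positivity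
    have hjεs : (j:ℝ) * ε ≤ s := by
      rw [hsdef]
      have : (j:ℝ) ≤ (M:ℝ) := by exact_mod_cast hjM.le
      nlinarith
    have hj1εs : ((j:ℝ) + 1) * ε ≤ s := by
      rw [hsdef]
      have : (j:ℝ) + 1 ≤ (M:ℝ) := by exact_mod_cast hjM
      nlinarith
    have step1 : (∫⁻ x in D, ENNReal.ofReal
        (‖w (x + (((j:ℝ) + 1) * ε) • n) - w (x + ((j:ℝ) * ε) • n)‖ ^ q)) =
        ∫⁻ x in D, Hε (x + ((j:ℝ) * ε) • n) := by
      apply lintegral_congr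
      intro x
      rw [hHdef]
      simp only
      rw [← hshift j x]
    rw [step1, lintegral_translate D hD Hε hHmeas (((j:ℝ) * ε) • n)]
    apply lintegral_mono_set
    rintro y hy
    have hy1 : y - ((j:ℝ) * ε) • n ∈ G := hy.1
    have hy2 : (y - ((j:ℝ) * ε) • n) + s • n ∈ G := hy.2
    have hyeq : (y - ((j:ℝ) * ε) • n) + ((j:ℝ) * ε) • n = y := sub_add_cancel _ _
    constructor
    · have := hdom _ hy1 s hs0 hst hy2 ((j:ℝ) * ε) ⟨hjε0, hjεs⟩
      rwa [hyeq] at this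
    · have := hdom _ hy1 s hs0 hst hy2 (((j:ℝ) + 1) * ε) ⟨by positivity, hj1εs⟩
      rw [hshift j _, hyeq] at this
      exact this
  have hone : ENNReal.ofReal c * (M:ℝ≥0∞) * ENNReal.ofReal (ε ^ q) = 1 := by
    have hMcast : ((M:ℕ):ℝ≥0∞) = ENNReal.ofReal (M:ℝ) := by rw [ENNReal.ofReal_natCast]
    rw [hMcast, ← ENNReal.ofReal_mul hc0,
      ← ENNReal.ofReal_mul (by positivity : (0:ℝ) ≤ c * (M:ℝ))]
    have h6 : (M:ℝ) ^ (q-1) = (M:ℝ) ^ q / (M:ℝ) := by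
      rw [Real.rpow_sub hM0, Real.rpow_one]
    have h5 : s ^ q = (M:ℝ) ^ q * ε ^ q := by
      rw [hsdef]; exact Real.mul_rpow hM0.le hε0.le
    have hMq : (0:ℝ) < (M:ℝ) ^ q := Real.rpow_pos_of_pos hM0 q
    have : c * (M:ℝ) * ε ^ q = 1 := by
      rw [hcdef, h6, h5]
      field_simp
    rw [this, ENNReal.ofReal_one]
  calc ∫⁻ x in D, ENNReal.ofReal (‖w (x + s • n) - w x‖ ^ q / s ^ q)
      ≤ ∫⁻ x in D, ENNReal.ofReal (c * ∑ j ∈ Finset.range M,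
          ‖w (x + (((j:ℝ) + 1) * ε) • n) - w (x + ((j:ℝ) * ε) • n)‖ ^ q) :=
        lintegral_mono fun x => hpoint x
    _ = ENNReal.ofReal c * ∑ j ∈ Finset.range M, ∫⁻ x in D, ENNReal.ofReal
          (‖w (x + (((j:ℝ) + 1) * ε) • n) - w (x + ((j:ℝ) * ε) • n)‖ ^ q) := by
        have heq : ∀ x : EuclideanSpace ℝ (Fin N),
            ENNReal.ofReal (c * ∑ j ∈ Finset.range M,
              ‖w (x + (((j:ℝ) + 1) * ε) • n) - w (x + ((j:ℝ) * ε) • n)‖ ^ q) =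
            ENNReal.ofReal c * ∑ j ∈ Finset.range M, ENNReal.ofReal
              (‖w (x + (((j:ℝ) + 1) * ε) • n) - w (x + ((j:ℝ) * ε) • n)‖ ^ q) := by
          intro x
          rw [ENNReal.ofReal_mul hc0, ENNReal.ofReal_sum_of_nonneg (fun j _ => by positivity)]
        simp_rw [heq]
        rw [lintegral_const_mul' _ _ ENNReal.ofReal_ne_top,
          lintegral_finset_sum' _ (fun j _ => ((hmeas2 _ _)).aemeasurable)]
    _ ≤ ENNReal.ofReal c * ∑ _j ∈ Finset.range M, ∫⁻ y in DΩ, Hε y := by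
        exact mul_le_mul_right (Finset.sum_le_sum hj) _
    _ = ENNReal.ofReal c * ((M:ℝ≥0∞) * ∫⁻ y in DΩ, Hε y) := by
        rw [Finset.sum_const, Finset.card_range, nsmul_eq_mul]
    _ = ENNReal.ofReal c * ((M:ℝ≥0∞) * (ENNReal.ofReal (ε ^ q) *
          ∫⁻ y in DΩ, ENNReal.ofReal (‖w (y + ε • n) - w y‖ ^ q / ε ^ q))) := by
        congr 2
        have heq2 : ∀ y : EuclideanSpace ℝ (Fin N), Hε y =
            ENNReal.ofReal (ε ^ q) * ENNReal.ofReal (‖w (y + ε • n) - w y‖ ^ q / ε ^ q) := by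
          intro y
          simp only [hHdef]
          rw [← ENNReal.ofReal_mul hεq.le, mul_comm (ε ^ q), div_mul_cancel₀ _ hεq.ne']
        simp_rw [heq2]
        rw [lintegral_const_mul' _ _ ENNReal.ofReal_ne_top]
    _ = ∫⁻ y in DΩ, ENNReal.ofReal (‖w (y + ε • n) - w y‖ ^ q / ε ^ q) := by
        rw [← mul_assoc, ← mul_assoc, hone, one_mul]

lemma ae_tendsto_translate
    (q : ℝ) (hq : 1 ≤ q)
    (w : EuclideanSpace ℝ (Fin N) → EuclideanSpace ℝ (Fin m))
    (hwq : MemLp w (ENNReal.ofReal q) volume)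
    (t : ℝ) (n : EuclideanSpace ℝ (Fin N)) (σ : ℕ → ℝ) (hσ : Tendsto σ atTop (𝓝 t)) :
    ∃ ρ : ℕ → ℕ, StrictMono ρ ∧
      ∀ᵐ x : EuclideanSpace ℝ (Fin N),
        Tendsto (fun j => w (x + σ (ρ j) • n)) atTop (𝓝 (w (x + t • n))) := by
  haveI : Fact (1 ≤ ENNReal.ofReal q) := ⟨ENNReal.one_le_ofReal.2 hq⟩
  have hp_top : ENNReal.ofReal q ≠ ∞ := ENNReal.ofReal_ne_top
  set W := hwq.toLp w with hW
  have hcmaincont : Continuous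
      (fun p : ℝ × EuclideanSpace ℝ (Fin N) => p.2 + p.1 • n) := by fun_prop
  set c : ℝ → C(EuclideanSpace ℝ (Fin N), EuclideanSpace ℝ (Fin N)) :=
    fun s => (ContinuousMap.curry ⟨_, hcmaincont⟩) s with hc
  have hcont : Continuous c := (ContinuousMap.curry ⟨_, hcmaincont⟩).continuous
  have mp : ∀ s : ℝ, MeasurePreserving (c s) volume volume := fun s =>
    measurePreserving_add_right volume (s • n)
  have hT : Tendsto (fun j => Lp.compMeasurePreserving (c (σ j)) (mp _) W) atTop
      (𝓝 (Lp.compMeasurePreserving (c t) (mp t) W)) :=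
    Filter.Tendsto.compMeasurePreservingLp tendsto_const_nhds
      ((hcont.tendsto t).comp hσ) _ _ hp_top
  have hTm := tendstoInMeasure_of_tendsto_Lp hT
  obtain ⟨ρ, hρmono, hρae⟩ := hTm.exists_seq_tendsto_ae
  refine ⟨ρ, hρmono, ?_⟩
  have hae1 : ∀ s : ℝ,
      (Lp.compMeasurePreserving (c s) (mp s) W : EuclideanSpace ℝ (Fin N) →
        EuclideanSpace ℝ (Fin m)) =ᵐ[volume] fun x => w (x + s • n) := by
    intro s
    have h1 := Lp.coeFn_compMeasurePreserving W (mp s)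
    have h2 : (W : EuclideanSpace ℝ (Fin N) → EuclideanSpace ℝ (Fin m)) ∘ (c s)
        =ᵐ[volume] w ∘ (c s) := by
      have h3 := hwq.coeFn_toLp
      exact ae_eq_comp (mp s).measurable.aemeasurable (by rwa [(mp s).map_eq])
    exact h1.trans h2
  filter_upwards [hρae, hae1 t, ae_all_iff.2 (fun j => hae1 (σ (ρ j)))] with x hx hxt hxj
  rw [← hxt]
  exact hx.congr hxj

lemma core (Ω G : Set (EuclideanSpace ℝ (Fin N))) (hΩopen : IsOpen Ω) (hGopen : IsOpen G)
    (hGΩ : G ⊆ Ω) (hGbdry : volume (frontier G) = 0)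
    (q : ℝ) (hq : 1 ≤ q)
    (w : EuclideanSpace ℝ (Fin N) → EuclideanSpace ℝ (Fin m)) (hw : Measurable w)
    (hwq : MemLp w (ENNReal.ofReal q) volume)
    (t : ℝ) (ht : 0 < t) (n : EuclideanSpace ℝ (Fin N)) (hn : ‖n‖ = 1)
    (hdom : ∀ x ∈ G, ∀ s : ℝ, 0 < s → s ≤ t → x + s • n ∈ G →
      ∀ r ∈ Icc (0:ℝ) s, x + r • n ∈ Ω)
    (ε : ℕ → ℝ) (hε : Tendsto ε atTop (𝓝[>] (0:ℝ))) :
    Phi G w q t n ≤ liminf (fun k => Phi Ω w q (ε k) n) atTop := by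
  have hGmeas : MeasurableSet G := hGopen.measurableSet
  have hΩmeas : MeasurableSet Ω := hΩopen.measurableSet
  have hfmeas : ∀ s : ℝ, Measurable fun x : EuclideanSpace ℝ (Fin N) =>
      (G.indicator (fun _ => (1:ℝ≥0∞)) (x + s • n)) *
        ENNReal.ofReal (‖w (x + s • n) - w x‖ ^ q / s ^ q) := by
    intro s
    apply Measurable.mul
    · exact (measurable_one.indicator hGmeas).comp (measurable_add_const _)
    · apply ENNReal.measurable_ofReal.comp
      have h1 : Measurable fun x : EuclideanSpace ℝ (Fin N) =>
          ‖w (x + s • n) - w x‖ ^ q := ((hw.comp (measurable_add_const _)).sub hw).norm.pow_const q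
      exact h1.div_const _
  rw [le_liminf_iff]
  intro b hb
  by_contra hcon
  rw [Filter.not_eventually] at hcon
  have hcon' : ∃ᶠ k in atTop, Phi Ω w q (ε k) n ≤ b := hcon.mono fun k hk => not_lt.1 hk
  obtain ⟨φ, hφmono, hφ⟩ := Filter.extraction_of_frequently_atTop hcon'
  set ε' : ℕ → ℝ := fun k => ε (φ k) with hε'def
  have hε' : Tendsto ε' atTop (𝓝[>] (0:ℝ)) := hε.comp hφmono.tendsto_atTop
  have hε'nhds : Tendsto ε' atTop (𝓝 (0:ℝ)) := hε'.mono_right nhdsWithin_le_nhds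
  have hε'0 : ∀ᶠ k in atTop, 0 < ε' k ∧ ε' k ≤ t := by
    have h1 : Ioc (0:ℝ) t ∈ 𝓝[>] (0:ℝ) := Ioc_mem_nhdsGT_of_mem ⟨le_refl 0, ht⟩
    exact (hε'.eventually h1).mono fun k hk => ⟨hk.1, hk.2⟩
  set σ : ℕ → ℝ := fun k =>
    if h : 0 < ε' k ∧ ε' k ≤ t then (⌊t / ε' k⌋₊ : ℝ) * ε' k else t with hσdef
  have floor_facts : ∀ k, 0 < ε' k → ε' k ≤ t →
      0 < (⌊t / ε' k⌋₊ : ℝ) * ε' k ∧ (⌊t / ε' k⌋₊ : ℝ) * ε' k ≤ t ∧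
        t - ε' k < (⌊t / ε' k⌋₊ : ℝ) * ε' k := by
    intro k h1 h2
    have hM1 : 1 ≤ ⌊t / ε' k⌋₊ := Nat.le_floor (by rw [Nat.cast_one, le_div_iff₀ h1]; linarith)
    have hM0 : (0:ℝ) < (⌊t / ε' k⌋₊ : ℝ) := by exact_mod_cast hM1
    have hfl : (⌊t / ε' k⌋₊ : ℝ) ≤ t / ε' k := Nat.floor_le (by positivity)
    have hfl2 : t / ε' k < (⌊t / ε' k⌋₊ : ℝ) + 1 := Nat.lt_floor_add_one _
    refine ⟨by positivity, ?_, ?_⟩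
    · calc (⌊t / ε' k⌋₊ : ℝ) * ε' k ≤ (t / ε' k) * ε' k := by nlinarith
        _ = t := by field_simp
    · have : t = (t / ε' k) * ε' k := by field_simp
      nlinarith
  have hσle : ∀ k, 0 < σ k ∧ σ k ≤ t := by
    intro k
    rw [hσdef]
    by_cases h : 0 < ε' k ∧ ε' k ≤ t
    · simp only [dif_pos h]
      exact ⟨(floor_facts k h.1 h.2).1, (floor_facts k h.1 h.2).2.1⟩
    · simp only [dif_neg h]
      exact ⟨ht, le_refl t⟩
  have hσtend : Tendsto σ atTop (𝓝 t) := by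
    have hlow : Tendsto (fun k => t - ε' k) atTop (𝓝 t) := by
      have h := (tendsto_const_nhds : Tendsto (fun _ : ℕ => t) atTop (𝓝 t)).sub hε'nhds
      simpa using h
    apply tendsto_of_tendsto_of_tendsto_of_le_of_le' hlow tendsto_const_nhds
    · filter_upwards [hε'0] with k hk
      rw [hσdef]
      simp only [dif_pos hk]
      exact ((floor_facts k hk.1 hk.2).2.2).le
    · exact Eventually.of_forall fun k => (hσle k).2
  have hΨb : ∀ᶠ k in atTop, Phi G w q (σ k) n ≤ b := by
    filter_upwards [hε'0] with k hk
    have hch := chain Ω G hΩmeas hGmeas q hq w hw t ht n hdom (ε' k) hk.1 hk.2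
    rw [hσdef]
    simp only [dif_pos hk]
    exact hch.trans (hφ k)
  obtain ⟨ρ, hρmono, hρae⟩ := ae_tendsto_translate q hq w hwq t n σ hσtend
  have hρtend : Tendsto (fun j => σ (ρ j)) atTop (𝓝 t) := hσtend.comp hρmono.tendsto_atTop
  -- a.e. pointwise liminf bound
  have hfront : ∀ᵐ x : EuclideanSpace ℝ (Fin N), x + t • n ∉ frontier G := by
    have hpre : volume ((fun x : EuclideanSpace ℝ (Fin N) => x + t • n) ⁻¹' frontier G) = 0 := by
      rw [(measurePreserving_add_right volume (t • n)).measure_preimage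
        (isClosed_frontier.measurableSet.nullMeasurableSet)]
      exact hGbdry
    rw [ae_iff]
    have heq : {a : EuclideanSpace ℝ (Fin N) | ¬ a + t • n ∉ frontier G} =
        (fun x : EuclideanSpace ℝ (Fin N) => x + t • n) ⁻¹' frontier G := by
      ext a; simp [not_not]
    rw [heq]
    exact hpre
  have hptwise : ∀ᵐ x ∂(volume.restrict G),
      (G.indicator (fun _ => (1:ℝ≥0∞)) (x + t • n)) *
          ENNReal.ofReal (‖w (x + t • n) - w x‖ ^ q / t ^ q) ≤
        liminf (fun j => (G.indicator (fun _ => (1:ℝ≥0∞)) (x + σ (ρ j) • n)) *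
          ENNReal.ofReal (‖w (x + σ (ρ j) • n) - w x‖ ^ q / (σ (ρ j)) ^ q)) atTop := by
    apply ae_restrict_of_ae
    filter_upwards [hfront, hρae] with x hx1 hx2
    by_cases hin : x + t • n ∈ G
    · -- eventually in G; full convergence
      have hxtend : Tendsto (fun j => x + σ (ρ j) • n) atTop (𝓝 (x + t • n)) := by
        have : Continuous (fun s : ℝ => x + s • n) := by fun_prop
        exact (this.tendsto t).comp hρtend
      have hmem : ∀ᶠ j in atTop, x + σ (ρ j) • n ∈ G :=
        hxtend.eventually_mem (hGopen.mem_nhds hin)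
      have htnorm : Tendsto (fun j => ‖w (x + σ (ρ j) • n) - w x‖) atTop
          (𝓝 ‖w (x + t • n) - w x‖) := ((hx2.sub tendsto_const_nhds).norm)
      have htq : Tendsto (fun j => ‖w (x + σ (ρ j) • n) - w x‖ ^ q) atTop
          (𝓝 (‖w (x + t • n) - w x‖ ^ q)) := htnorm.rpow_const (Or.inr (by linarith))
      have hdq : Tendsto (fun j => (σ (ρ j)) ^ q) atTop (𝓝 (t ^ q)) :=
        hρtend.rpow_const (Or.inr (by linarith))
      have htq0 : t ^ q ≠ 0 := (Real.rpow_pos_of_pos ht q).ne'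
      have hdiv : Tendsto (fun j => ‖w (x + σ (ρ j) • n) - w x‖ ^ q / (σ (ρ j)) ^ q) atTop
          (𝓝 (‖w (x + t • n) - w x‖ ^ q / t ^ q)) := htq.div hdq htq0
      have hofReal : Tendsto (fun j =>
          ENNReal.ofReal (‖w (x + σ (ρ j) • n) - w x‖ ^ q / (σ (ρ j)) ^ q)) atTop
          (𝓝 (ENNReal.ofReal (‖w (x + t • n) - w x‖ ^ q / t ^ q))) :=
        (ENNReal.continuous_ofReal.tendsto _).comp hdiv
      have heventual : ∀ᶠ j in atTop,
          (G.indicator (fun _ => (1:ℝ≥0∞)) (x + σ (ρ j) • n)) *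
            ENNReal.ofReal (‖w (x + σ (ρ j) • n) - w x‖ ^ q / (σ (ρ j)) ^ q) =
          ENNReal.ofReal (‖w (x + σ (ρ j) • n) - w x‖ ^ q / (σ (ρ j)) ^ q) := by
        filter_upwards [hmem] with j hj
        rw [Set.indicator_of_mem hj, one_mul]
      have hliminf := hofReal.liminf_eq
      rw [Set.indicator_of_mem hin, one_mul, ← hliminf]
      exact le_of_eq (Filter.liminf_congr heventual).symm
    · rw [Set.indicator_of_notMem hin, zero_mul]
      exact zero_le
  have hfatou : Phi G w q t n ≤ liminf (fun j => Phi G w q (σ (ρ j)) n) atTop := by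
    calc Phi G w q t n
        ≤ ∫⁻ x in G, liminf (fun j => (G.indicator (fun _ => (1:ℝ≥0∞)) (x + σ (ρ j) • n)) *
            ENNReal.ofReal (‖w (x + σ (ρ j) • n) - w x‖ ^ q / (σ (ρ j)) ^ q)) atTop :=
          lintegral_mono_ae hptwise
      _ ≤ liminf (fun j => Phi G w q (σ (ρ j)) n) atTop :=
          lintegral_liminf_le' (fun j => (hfmeas (σ (ρ j))).aemeasurable)
  have hliminfb : liminf (fun j => Phi G w q (σ (ρ j)) n) atTop ≤ b := by
    have hev : ∀ᶠ j in atTop, Phi G w q (σ (ρ j)) n ≤ b := by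
      exact hρmono.tendsto_atTop.eventually hΨb
    calc liminf (fun j => Phi G w q (σ (ρ j)) n) atTop ≤
        liminf (fun _ : ℕ => b) atTop := liminf_le_liminf hev
      _ = b := liminf_const b
  exact absurd (hb.trans_le (hfatou.trans hliminfb)) (lt_irrefl b)

end SP11

/-- for `G ⊆ Ω` open with negligible boundary, which is either convex or
at distance `> t` from `ℝ^N ∖ Ω`, the spherical difference quotient of `u` at the fixed
scale `t` over `G` is bounded by the liminf as `ε → 0⁺` of the spherical difference
quotients over `Ω`. -/
theorem stmt_11 (N m : ℕ) (Ω : Set (EuclideanSpace ℝ (Fin N))) (hΩopen : IsOpen Ω)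
    (q : ℝ) (hq : 1 ≤ q)
    (u : EuclideanSpace ℝ (Fin N) → EuclideanSpace ℝ (Fin m))
    (hu : MemLp u (ENNReal.ofReal q) (volume.restrict Ω))
    (t : ℝ) (ht : 0 < t)
    (G : Set (EuclideanSpace ℝ (Fin N))) (hGopen : IsOpen G) (hGΩ : G ⊆ Ω)
    (hGbdry : volume (frontier G) = 0)
    (hG : (ENNReal.ofReal t < ⨅ x ∈ G, EMetric.infEdist x Ωᶜ) ∨ Convex ℝ G) :
    (∫⁻ n in sphere (0 : EuclideanSpace ℝ (Fin N)) 1,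
        (∫⁻ x in G,
          (G.indicator (fun _ => (1 : ℝ≥0∞)) (x + t • n)) *
            ENNReal.ofReal (‖u (x + t • n) - u x‖ ^ q / t ^ q))
        ∂(μH[(N : ℝ) - 1])) ≤
      Filter.liminf
        (fun ε : ℝ =>
          ∫⁻ n in sphere (0 : EuclideanSpace ℝ (Fin N)) 1,
            (∫⁻ x in Ω,
              (Ω.indicator (fun _ => (1 : ℝ≥0∞)) (x + ε • n)) *
                ENNReal.ofReal (‖u (x + ε • n) - u x‖ ^ q / ε ^ q))
            ∂(μH[(N : ℝ) - 1]))
        (𝓝[>] (0 : ℝ)) := by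
  classical
  have hΩmeas : MeasurableSet Ω := hΩopen.measurableSet
  have hGmeas : MeasurableSet G := hGopen.measurableSet
  set g := hu.aestronglyMeasurable.mk u with hgdef
  have hgm : StronglyMeasurable g := hu.aestronglyMeasurable.stronglyMeasurable_mk
  have hug : u =ᵐ[volume.restrict Ω] g := hu.aestronglyMeasurable.ae_eq_mk
  set w : EuclideanSpace ℝ (Fin N) → EuclideanSpace ℝ (Fin m) := Ω.indicator g with hwdef
  have hw : Measurable w := (hgm.indicator hΩmeas).measurable
  have hwq : MemLp w (ENNReal.ofReal q) volume := by
    rw [hwdef, memLp_indicator_iff_restrict hΩmeas]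
    exact (memLp_congr_ae hug).1 hu
  -- the bad set where `u` and `w` differ inside `Ω`
  have hbad : volume {x | x ∈ Ω ∧ u x ≠ w x} = 0 := by
    have h1 : (volume.restrict Ω) {x | u x ≠ g x} = 0 := by
      rw [← ae_iff] at *
      exact hug
    rw [Measure.restrict_apply' hΩmeas] at h1
    apply measure_mono_null _ h1
    intro x hx
    have hwg : w x = g x := Set.indicator_of_mem hx.1 g
    exact ⟨fun hne => hx.2 (hne.trans hwg.symm), hx.1⟩
  obtain ⟨B, hBsub, hBmeas, hB0⟩ := exists_measurable_superset_of_null hbad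
  have hBtrans : ∀ v : EuclideanSpace ℝ (Fin N),
      volume ((fun x => x + v) ⁻¹' B) = 0 := by
    intro v
    rw [(measurePreserving_add_right volume v).measure_preimage hBmeas.nullMeasurableSet]
    exact hB0
  -- rewrite the integrals in terms of `w`
  have hSeq : ∀ (S : Set (EuclideanSpace ℝ (Fin N))), MeasurableSet S → S ⊆ Ω →
      ∀ (s : ℝ) (n : EuclideanSpace ℝ (Fin N)),
      (∫⁻ x in S, (S.indicator (fun _ => (1:ℝ≥0∞)) (x + s • n)) *
        ENNReal.ofReal (‖u (x + s • n) - u x‖ ^ q / s ^ q)) = SP11.Phi S w q s n := by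
    intro S hSmeas hSΩ s n
    apply lintegral_congr_ae
    have hb1 : ∀ᵐ x ∂(volume.restrict S), x ∉ B := by
      apply ae_restrict_of_ae
      exact (measure_eq_zero_iff_ae_notMem (μ := volume)).1 hB0
    have hb2 : ∀ᵐ x ∂(volume.restrict S), x + s • n ∉ B := by
      apply ae_restrict_of_ae
      rw [ae_iff]
      have heq : {a : EuclideanSpace ℝ (Fin N) | ¬ a + s • n ∉ B} =
          (fun x : EuclideanSpace ℝ (Fin N) => x + s • n) ⁻¹' B := by
        ext a; simp [not_not]
      rw [heq]
      exact hBtrans _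
    filter_upwards [hb1, hb2, ae_restrict_mem hSmeas] with x hx1 hx2 hxS
    by_cases hmem : x + s • n ∈ S
    · have h1 : u x = w x := by
        by_contra hne
        exact hx1 (hBsub ⟨hSΩ hxS, hne⟩)
      have h2 : u (x + s • n) = w (x + s • n) := by
        by_contra hne
        exact hx2 (hBsub ⟨hSΩ hmem, hne⟩)
      rw [h1, h2]
    · rw [Set.indicator_of_notMem hmem, zero_mul, zero_mul]
  -- domain condition
  have hdom : ∀ n : EuclideanSpace ℝ (Fin N), ‖n‖ = 1 → ∀ x ∈ G, ∀ s : ℝ, 0 < s → s ≤ t →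
      x + s • n ∈ G → ∀ r ∈ Set.Icc (0:ℝ) s, x + r • n ∈ Ω := by
    intro n hn x hx s hs0 hst hxs r hr
    rcases hG with hdist | hconv
    · by_contra hout
      have h1 : EMetric.infEdist x Ωᶜ ≤ edist x (x + r • n) :=
        EMetric.infEdist_le_edist_of_mem hout
      have h2 : edist x (x + r • n) = ENNReal.ofReal r := by
        rw [edist_dist, dist_eq_norm]
        have : x - (x + r • n) = -(r • n) := by abel
        rw [this, norm_neg, norm_smul, hn, mul_one, Real.norm_eq_abs,
          abs_of_nonneg hr.1]
      have h4 : ⨅ y ∈ G, EMetric.infEdist y Ωᶜ ≤ EMetric.infEdist x Ωᶜ := biInf_le _ hx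
      have h5 : ENNReal.ofReal t < ENNReal.ofReal t :=
        lt_of_lt_of_le hdist (((h4.trans h1).trans_eq h2).trans
          (ENNReal.ofReal_le_ofReal (hr.2.trans hst)))
      exact lt_irrefl _ h5
    · have hseg : x + r • n ∈ segment ℝ x (x + s • n) := by
        refine ⟨1 - r / s, r / s, ?_, div_nonneg hr.1 hs0.le, by ring, ?_⟩
        · have : r / s ≤ 1 := (div_le_one hs0).2 hr.2
          linarith
        · rw [smul_add, ← add_assoc, ← add_smul, sub_add_cancel, one_smul, smul_smul,
            div_mul_cancel₀ _ hs0.ne']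
      exact hGΩ (hconv.segment_subset hx hxs hseg)
  -- measurability in `n`
  have hPhimeas : ∀ s : ℝ, Measurable fun n : EuclideanSpace ℝ (Fin N) =>
      SP11.Phi Ω w q s n := by
    intro s
    have hmap : Measurable fun p : EuclideanSpace ℝ (Fin N) × EuclideanSpace ℝ (Fin N) =>
        p.2 + s • p.1 := by fun_prop
    have hjoint : Measurable (fun p : EuclideanSpace ℝ (Fin N) × EuclideanSpace ℝ (Fin N) =>
        (Ω.indicator (fun _ => (1:ℝ≥0∞)) (p.2 + s • p.1)) *
          ENNReal.ofReal (‖w (p.2 + s • p.1) - w p.2‖ ^ q / s ^ q)) := by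
      apply Measurable.mul
      · exact (measurable_one.indicator hΩmeas).comp hmap
      · apply ENNReal.measurable_ofReal.comp
        have h1 : Measurable fun p : EuclideanSpace ℝ (Fin N) × EuclideanSpace ℝ (Fin N) =>
            ‖w (p.2 + s • p.1) - w p.2‖ ^ q :=
          (((hw.comp hmap).sub (hw.comp measurable_snd)).norm).pow_const q
        exact h1.div_const _
    exact hjoint.lintegral_prod_right'
  have hsm : MeasurableSet (sphere (0 : EuclideanSpace ℝ (Fin N)) 1) :=
    (isClosed_sphere).measurableSet
  -- rewrite statement
  have hL : (∫⁻ n in sphere (0 : EuclideanSpace ℝ (Fin N)) 1,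
      (∫⁻ x in G, (G.indicator (fun _ => (1 : ℝ≥0∞)) (x + t • n)) *
        ENNReal.ofReal (‖u (x + t • n) - u x‖ ^ q / t ^ q)) ∂(μH[(N : ℝ) - 1])) =
      ∫⁻ n in sphere (0 : EuclideanSpace ℝ (Fin N)) 1, SP11.Phi G w q t n ∂(μH[(N : ℝ) - 1]) :=
    lintegral_congr fun n => hSeq G hGmeas hGΩ t n
  have hR : (fun ε : ℝ => ∫⁻ n in sphere (0 : EuclideanSpace ℝ (Fin N)) 1,
      (∫⁻ x in Ω, (Ω.indicator (fun _ => (1 : ℝ≥0∞)) (x + ε • n)) *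
        ENNReal.ofReal (‖u (x + ε • n) - u x‖ ^ q / ε ^ q)) ∂(μH[(N : ℝ) - 1])) =
      (fun ε : ℝ => ∫⁻ n in sphere (0 : EuclideanSpace ℝ (Fin N)) 1,
        SP11.Phi Ω w q ε n ∂(μH[(N : ℝ) - 1])) :=
    funext fun ε => lintegral_congr fun n => hSeq Ω hΩmeas subset_rfl ε n
  rw [hL, hR]
  -- final liminf argument
  rw [le_liminf_iff]
  intro b hb
  by_contra hcon
  rw [Filter.not_eventually] at hcon
  have hcon' : ∃ᶠ ε in 𝓝[>] (0:ℝ),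
      (∫⁻ n in sphere (0 : EuclideanSpace ℝ (Fin N)) 1,
        SP11.Phi Ω w q ε n ∂(μH[(N : ℝ) - 1])) ≤ b := hcon.mono fun ε hε => not_lt.1 hε
  obtain ⟨εseq, hεtend, hεle⟩ := Filter.exists_seq_forall_of_frequently hcon'
  have hcore : ∀ n ∈ sphere (0 : EuclideanSpace ℝ (Fin N)) 1,
      SP11.Phi G w q t n ≤ liminf (fun k => SP11.Phi Ω w q (εseq k) n) atTop := by
    intro n hn
    have hn' : ‖n‖ = 1 := by simpa using hn
    exact SP11.core Ω G hΩopen hGopen hGΩ hGbdry q hq w hw hwq t ht n hn'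
      (hdom n hn') εseq hεtend
  have step1 : (∫⁻ n in sphere (0 : EuclideanSpace ℝ (Fin N)) 1,
      SP11.Phi G w q t n ∂(μH[(N : ℝ) - 1])) ≤
      ∫⁻ n in sphere (0 : EuclideanSpace ℝ (Fin N)) 1,
        liminf (fun k => SP11.Phi Ω w q (εseq k) n) atTop ∂(μH[(N : ℝ) - 1]) := by
    apply lintegral_mono_ae
    filter_upwards [ae_restrict_mem hsm] with n hn
    exact hcore n hn
  have step2 : (∫⁻ n in sphere (0 : EuclideanSpace ℝ (Fin N)) 1,
      liminf (fun k => SP11.Phi Ω w q (εseq k) n) atTop ∂(μH[(N : ℝ) - 1])) ≤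
      liminf (fun k => ∫⁻ n in sphere (0 : EuclideanSpace ℝ (Fin N)) 1,
        SP11.Phi Ω w q (εseq k) n ∂(μH[(N : ℝ) - 1])) atTop :=
    lintegral_liminf_le' fun k => (hPhimeas (εseq k)).aemeasurable
  have step3 : liminf (fun k => ∫⁻ n in sphere (0 : EuclideanSpace ℝ (Fin N)) 1,
      SP11.Phi Ω w q (εseq k) n ∂(μH[(N : ℝ) - 1])) atTop ≤ b := by
    calc liminf (fun k => ∫⁻ n in sphere (0 : EuclideanSpace ℝ (Fin N)) 1,
        SP11.Phi Ω w q (εseq k) n ∂(μH[(N : ℝ) - 1])) atTop ≤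
        liminf (fun _ : ℕ => b) atTop :=
          liminf_le_liminf (Eventually.of_forall fun k => hεle k)
      _ = b := liminf_const b
  exact absurd (hb.trans_le ((step1.trans step2).trans step3)) (lt_irrefl b)
end
end

section
/- Let Ω ⊂ ℝ^N be a convex open domain with L^N(∂Ω) = 0, q ≥ 1, and u ∈ L^q(Ω, ℝ^m). Then sup_{ε ∈ (0,∞)} ∫_{S^{N-1}} ∫_Ω |u(x+εn)−u(x)|^q/ε^q · χ_Ω(x+εn) dx dH^{N-1}(n) = lim_{ε→0⁺} ∫_{S^{N-1}} ∫_Ω |u(x+εn)−u(x)|^q/ε^q · χ_Ω(x+εn) dx dH^{N-1}(n); in particular the limit as ε → 0⁺ exists in [0,+∞]. -/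
open MeasureTheory Metric Set Filter ENNReal
open scoped Topology

open scoped NNReal

noncomputable section


namespace Stmt12Haus


lemma normsq (k : ℕ) (v : EuclideanSpace ℝ (Fin k)) : ‖v‖^2 = ∑ i, (v i)^2 := by
  rw [EuclideanSpace.norm_eq, Real.sq_sqrt (by positivity)]
  simp [sq_abs]

lemma sqrt_lip {a b c : ℝ} (hc : 0 < c) (ha : c ≤ a) (hb : c ≤ b) :
    |Real.sqrt a - Real.sqrt b| ≤ |a - b| / (2 * Real.sqrt c) := by
  have ha0 : (0:ℝ) ≤ a := hc.le.trans ha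
  have hb0 : (0:ℝ) ≤ b := hc.le.trans hb
  have hsc : 0 < Real.sqrt c := Real.sqrt_pos.2 hc
  have hkey : |Real.sqrt a - Real.sqrt b| * (Real.sqrt a + Real.sqrt b) = |a - b| := by
    rw [← abs_of_nonneg (by positivity : (0:ℝ) ≤ Real.sqrt a + Real.sqrt b), ← abs_mul]
    congr 1
    have h1 := Real.sq_sqrt ha0
    have h2 := Real.sq_sqrt hb0
    ring_nf
    nlinarith [Real.sq_sqrt ha0, Real.sq_sqrt hb0]
  have hge : 2 * Real.sqrt c ≤ Real.sqrt a + Real.sqrt b := by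
    have := Real.sqrt_le_sqrt ha
    have := Real.sqrt_le_sqrt hb
    linarith
  rw [le_div_iff₀ (by positivity)]
  calc |Real.sqrt a - Real.sqrt b| * (2 * Real.sqrt c)
      ≤ |Real.sqrt a - Real.sqrt b| * (Real.sqrt a + Real.sqrt b) := by
        apply mul_le_mul_of_nonneg_left hge (abs_nonneg _)
    _ = |a - b| := hkey

lemma hausdorff_sphere_lt_top (N : ℕ) :
    μH[(N:ℝ)-1] (sphere (0 : EuclideanSpace ℝ (Fin N)) 1) < ⊤ := by
  cases N with
  | zero =>
      have : (sphere (0 : EuclideanSpace ℝ (Fin 0)) 1) = (∅ : Set _) := by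
        ext x
        simp [Subsingleton.elim x 0]
      rw [this]
      simp
  | succ n =>
  have hcast : ((n+1:ℕ):ℝ) - 1 = (n:ℝ) := by push_cast; ring
  rw [hcast]
  set τ : ℝ := 1/((n:ℝ)+1) with hτ
  have hτ0 : 0 < τ := by positivity
  have hτ1 : τ ≤ 1 := by
    rw [hτ, div_le_one (by positivity)]
    simp
  set D : Set (EuclideanSpace ℝ (Fin n)) := {y | ‖y‖^2 ≤ 1 - τ} with hD
  set h : EuclideanSpace ℝ (Fin n) → ℝ := fun y => Real.sqrt (1 - ‖y‖^2) with hh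
  set g : ℝ → Fin (n+1) → EuclideanSpace ℝ (Fin n) → EuclideanSpace ℝ (Fin (n+1)) :=
    fun σ i y => (WithLp.equiv 2 (Fin (n+1) → ℝ)).symm
      (i.insertNth (σ * h y) (WithLp.equiv 2 (Fin n → ℝ) y)) with hg
  have hynorm : ∀ y ∈ D, ‖y‖ ≤ 1 := by
    intro y hy
    nlinarith [norm_nonneg y, hy.out]
  have hgapp_same : ∀ σ i y, g σ i y i = σ * h y := by
    intro σ i y
    simp [hg, PiLp.toLp_apply, Fin.insertNth_apply_same]
  have hgapp_above : ∀ σ i y k, g σ i y (i.succAbove k) = y k := by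
    intro σ i y k
    simp [hg, PiLp.toLp_apply, Fin.insertNth_apply_succAbove, WithLp.equiv_apply]
  -- Lipschitz bound
  set K : ℝ≥0 := Real.toNNReal (Real.sqrt ((n:ℝ)+2)) with hK
  have hLip : ∀ σ : ℝ, σ^2 = 1 → ∀ i : Fin (n+1), LipschitzOnWith K (g σ i) D := by
    intro σ hσ i
    apply LipschitzOnWith.of_dist_le_mul
    intro y hy z hz
    have hyD : ‖y‖^2 ≤ 1 - τ := hy.out
    have hzD : ‖z‖^2 ≤ 1 - τ := hz.out
    have hdistsq : dist (g σ i y) (g σ i z)^2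
        = (σ * h y - σ * h z)^2 + ∑ k, (y k - z k)^2 := by
      rw [EuclideanSpace.dist_eq, Real.sq_sqrt (by positivity)]
      rw [Fin.sum_univ_succAbove (fun j => dist (g σ i y j) (g σ i z j) ^ 2) i]
      congr 1
      · rw [hgapp_same, hgapp_same, Real.dist_eq, sq_abs]
      · refine Finset.sum_congr rfl fun k _ => ?_
        rw [hgapp_above, hgapp_above, Real.dist_eq, sq_abs]
    have hdyz : ∑ k, (y k - z k)^2 = dist y z ^2 := by
      rw [EuclideanSpace.dist_eq, Real.sq_sqrt (by positivity)]
      refine Finset.sum_congr rfl fun k _ => ?_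
      rw [Real.dist_eq, sq_abs]
    have hhfin : (h y - h z)^2 ≤ ((n:ℝ)+1) * dist y z ^2 := by
      have hlip := sqrt_lip hτ0 (by linarith : τ ≤ 1 - ‖y‖^2) (by linarith : τ ≤ 1 - ‖z‖^2)
      have habs : |(1 - ‖y‖^2) - (1 - ‖z‖^2)| ≤ 2 * dist y z := by
        have h1 : |(1 - ‖y‖^2) - (1 - ‖z‖^2)| = |‖z‖ - ‖y‖| * (‖z‖ + ‖y‖) := by
          rw [← abs_of_nonneg (by positivity : (0:ℝ) ≤ ‖z‖ + ‖y‖), ← abs_mul]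
          congr 1; ring
        have h2 : |‖z‖ - ‖y‖| ≤ dist y z := by
          rw [dist_comm, dist_eq_norm]
          exact abs_norm_sub_norm_le z y
        have h3 : ‖z‖ + ‖y‖ ≤ 2 := by
          have := hynorm y hy; have := hynorm z hz; linarith
        calc |(1 - ‖y‖^2) - (1 - ‖z‖^2)| = |‖z‖ - ‖y‖| * (‖z‖ + ‖y‖) := h1
          _ ≤ dist y z * 2 := mul_le_mul h2 h3 (by positivity) dist_nonneg
          _ = 2 * dist y z := by ring
      have hsqτ : Real.sqrt τ ^ 2 = τ := Real.sq_sqrt hτ0.le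
      have hub : |h y - h z| ≤ dist y z / Real.sqrt τ := by
        calc |h y - h z| ≤ |(1 - ‖y‖^2) - (1 - ‖z‖^2)| / (2 * Real.sqrt τ) := hlip
          _ ≤ (2 * dist y z) / (2 * Real.sqrt τ) := by
              apply div_le_div_of_nonneg_right habs (by positivity)
          _ = dist y z / Real.sqrt τ := by ring
      have h4 : (h y - h z)^2 ≤ (dist y z / Real.sqrt τ)^2 := by
        rw [← sq_abs (h y - h z)]
        apply pow_le_pow_left₀ (abs_nonneg _) hub
      calc (h y - h z)^2 ≤ (dist y z / Real.sqrt τ)^2 := h4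
        _ = dist y z ^2 / τ := by rw [div_pow, hsqτ]
        _ = ((n:ℝ)+1) * dist y z^2 := by
            rw [hτ]; field_simp
    have hfinal : dist (g σ i y) (g σ i z)^2 ≤ ((n:ℝ)+2) * dist y z^2 := by
      rw [hdistsq, hdyz]
      have : (σ * h y - σ * h z)^2 = σ^2 * (h y - h z)^2 := by ring
      rw [this, hσ, one_mul]
      nlinarith [hhfin, sq_nonneg (dist y z)]
    have hK' : (K : ℝ) = Real.sqrt ((n:ℝ)+2) := Real.coe_toNNReal _ (Real.sqrt_nonneg _)
    have : dist (g σ i y) (g σ i z) ≤ Real.sqrt ((n:ℝ)+2) * dist y z := by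
      have h5 : dist (g σ i y) (g σ i z) = Real.sqrt (dist (g σ i y) (g σ i z)^2) :=
        (Real.sqrt_sq dist_nonneg).symm
      rw [h5]
      calc Real.sqrt (dist (g σ i y) (g σ i z)^2) ≤ Real.sqrt (((n:ℝ)+2) * dist y z^2) :=
            Real.sqrt_le_sqrt hfinal
        _ = Real.sqrt ((n:ℝ)+2) * dist y z := by
            rw [Real.sqrt_mul (by positivity), Real.sqrt_sq dist_nonneg]
    rwa [hK']
  -- Covering
  have hcov : sphere (0 : EuclideanSpace ℝ (Fin (n+1))) 1
      ⊆ ⋃ (i : Fin (n+1)), ⋃ (b : Bool), (g (cond b 1 (-1)) i) '' D := by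
    intro x hx
    have hxn : ‖x‖ = 1 := by simpa using hx
    have hsum : ∑ j, (x j)^2 = 1 := by rw [← normsq]; rw [hxn]; norm_num
    obtain ⟨i, -, hi⟩ := Finset.exists_max_image Finset.univ (fun j => (x j)^2)
      ⟨0, Finset.mem_univ 0⟩
    have hile : 1 ≤ ((n:ℝ)+1) * (x i)^2 := by
      have h1 : ∑ j, (x j)^2 ≤ Finset.univ.card • ((x i)^2) :=
        Finset.sum_le_card_nsmul _ _ _ (fun j _ => hi j (Finset.mem_univ j))
      rw [hsum] at h1
      simpa [Finset.card_univ, nsmul_eq_mul] using h1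
    have hxi : τ ≤ (x i)^2 := by
      rw [hτ, div_le_iff₀ (by positivity)]
      linarith
    set y : EuclideanSpace ℝ (Fin n) := (WithLp.equiv 2 (Fin n → ℝ)).symm
      (Fin.removeNth i (WithLp.equiv 2 (Fin (n+1) → ℝ) x)) with hy
    have hyk : ∀ k, y k = x (i.succAbove k) := by
      intro k
      simp [hy, PiLp.toLp_apply, Fin.removeNth, WithLp.equiv_apply]
    have hynormsq : ‖y‖^2 = 1 - (x i)^2 := by
      rw [normsq]
      have := Fin.sum_univ_succAbove (fun j => (x j)^2) i
      rw [hsum] at this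
      simp only [hyk]
      linarith [this]
    have hyD : y ∈ D := by
      rw [hD, Set.mem_setOf_eq, hynormsq]
      linarith
    have hhy : h y = |x i| := by
      rw [hh]
      simp only [hynormsq]
      rw [show 1 - (1 - (x i)^2) = (x i)^2 by ring, Real.sqrt_sq_eq_abs]
    refine Set.mem_iUnion.2 ⟨i, ?_⟩
    rcases le_or_gt 0 (x i) with hxi0 | hxi0
    · refine Set.mem_iUnion.2 ⟨true, ⟨y, hyD, ?_⟩⟩
      show (WithLp.equiv 2 (Fin (n+1) → ℝ)).symm
        (i.insertNth ((1:ℝ) * h y) (WithLp.equiv 2 (Fin n → ℝ) y)) = x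
      rw [Equiv.symm_apply_eq]
      have hyx : WithLp.equiv 2 (Fin n → ℝ) y
          = Fin.removeNth i (WithLp.equiv 2 (Fin (n+1) → ℝ) x) := by
        rw [hy]; exact (WithLp.equiv 2 (Fin n → ℝ)).apply_symm_apply _
      rw [hyx, one_mul, hhy, abs_of_nonneg hxi0]
      simpa [WithLp.equiv_apply] using
        Fin.insertNth_self_removeNth i (WithLp.equiv 2 (Fin (n+1) → ℝ) x)
    · refine Set.mem_iUnion.2 ⟨false, ⟨y, hyD, ?_⟩⟩
      show (WithLp.equiv 2 (Fin (n+1) → ℝ)).symm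
        (i.insertNth ((-1:ℝ) * h y) (WithLp.equiv 2 (Fin n → ℝ) y)) = x
      rw [Equiv.symm_apply_eq]
      have hyx : WithLp.equiv 2 (Fin n → ℝ) y
          = Fin.removeNth i (WithLp.equiv 2 (Fin (n+1) → ℝ) x) := by
        rw [hy]; exact (WithLp.equiv 2 (Fin n → ℝ)).apply_symm_apply _
      rw [hyx, hhy, abs_of_neg hxi0]
      rw [show (-1:ℝ) * - x i = x i by ring]
      simpa [WithLp.equiv_apply] using
        Fin.insertNth_self_removeNth i (WithLp.equiv 2 (Fin (n+1) → ℝ) x)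
  -- conclude
  have hd0 : (0:ℝ) ≤ (n:ℝ) := Nat.cast_nonneg n
  have hDsub : D ⊆ closedBall (0 : EuclideanSpace ℝ (Fin n)) 1 := by
    intro y hy; rw [mem_closedBall, dist_zero_right]; exact hynorm y hy
  have hDfin : μH[(n:ℝ)] D < ⊤ := by
    refine lt_of_le_of_lt (measure_mono hDsub) ?_
    have hanti := PiLp.antilipschitzWith_ofLp 2 (fun _ : Fin n => ℝ)
    refine lt_of_le_of_lt
      (hanti.le_hausdorffMeasure_image hd0 (closedBall (0 : EuclideanSpace ℝ (Fin n)) 1)) ?_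
    have himgfin :
        μH[(n:ℝ)] ((WithLp.equiv 2 (Fin n → ℝ)) '' closedBall 0 1) < ⊤ := by
      have himg : (WithLp.equiv 2 (Fin n → ℝ)) '' (closedBall 0 1)
          ⊆ closedBall (0 : Fin n → ℝ) 1 := by
        rintro _ ⟨w, hw, rfl⟩
        rw [mem_closedBall] at *
        calc dist (WithLp.equiv 2 (Fin n → ℝ) w) 0
            = dist (WithLp.equiv 2 (Fin n → ℝ) w) (WithLp.equiv 2 (Fin n → ℝ) 0) := by
              norm_num
          _ ≤ dist w 0 := by
              simpa using (PiLp.lipschitzWith_ofLp 2 (fun _ : Fin n => ℝ)).dist_le_mul w 0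
          _ ≤ 1 := hw
      refine lt_of_le_of_lt (measure_mono himg) ?_
      have hpi : (μH[(n:ℝ)] : Measure (Fin n → ℝ)) = volume := by
        have h := hausdorffMeasure_pi_real (ι := Fin n)
        simpa using h
      rw [hpi]
      exact (isCompact_closedBall _ _).measure_lt_top
    exact ENNReal.mul_lt_top
      (ENNReal.rpow_lt_top_of_nonneg hd0 ENNReal.coe_ne_top) himgfin
  refine lt_of_le_of_lt (measure_mono hcov) ?_
  refine lt_of_le_of_lt (measure_iUnion_le _) ?_
  have hone : ∀ (i : Fin (n+1)) (b : Bool), μH[(n:ℝ)] (g (cond b 1 (-1)) i '' D) < ⊤ := by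
    intro i b
    have hσ : ((cond b 1 (-1) : ℝ))^2 = 1 := by cases b <;> norm_num
    refine lt_of_le_of_lt ((hLip _ hσ i).hausdorffMeasure_image_le hd0) ?_
    exact ENNReal.mul_lt_top
      (ENNReal.rpow_lt_top_of_nonneg hd0 ENNReal.coe_ne_top) hDfin
  rw [tsum_fintype]
  refine ENNReal.sum_lt_top.2 fun i _ => ?_
  refine lt_of_le_of_lt (measure_iUnion_le _) ?_
  rw [tsum_fintype]
  exact ENNReal.sum_lt_top.2 fun b _ => hone i b
end Stmt12Haus

namespace Stmt12Aux


variable {N m : ℕ}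

def domSet (Ω : Set (EuclideanSpace ℝ (Fin N))) (v : EuclideanSpace ℝ (Fin N)) :
    Set (EuclideanSpace ℝ (Fin N)) := Ω ∩ (fun x => x + v) ⁻¹' Ω

def phi (Ω : Set (EuclideanSpace ℝ (Fin N))) (q : ℝ)
    (u : EuclideanSpace ℝ (Fin N) → EuclideanSpace ℝ (Fin m))
    (v : EuclideanSpace ℝ (Fin N)) : ℝ≥0∞ :=
  eLpNorm ((domSet Ω v).indicator (fun x => u (x + v) - u x)) (ENNReal.ofReal q) volume

variable {Ω : Set (EuclideanSpace ℝ (Fin N))} {q : ℝ}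
  {u : EuclideanSpace ℝ (Fin N) → EuclideanSpace ℝ (Fin m)}

lemma meas_domSet (hΩ : IsOpen Ω) (v : EuclideanSpace ℝ (Fin N)) :
    MeasurableSet (domSet Ω v) :=
  hΩ.measurableSet.inter ((hΩ.preimage (continuous_id.add continuous_const)).measurableSet)

lemma phi_pow_eq (hΩ : IsOpen Ω) (hq : 1 ≤ q) (v : EuclideanSpace ℝ (Fin N)) :
    phi Ω q u v ^ q = ∫⁻ x in domSet Ω v, (‖u (x + v) - u x‖₊ : ℝ≥0∞) ^ q ∂volume := by
  have hq0 : 0 < q := lt_of_lt_of_le zero_lt_one hq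
  have hp0 : (ENNReal.ofReal q) ≠ 0 := by simp [ENNReal.ofReal_pos.2 hq0, ne_of_gt]
  have hpt : (ENNReal.ofReal q) ≠ ⊤ := ENNReal.ofReal_ne_top
  rw [phi, eLpNorm_indicator_eq_eLpNorm_restrict (meas_domSet hΩ v),
    eLpNorm_eq_lintegral_rpow_enorm_toReal hp0 hpt, ENNReal.toReal_ofReal hq0.le,
    ← ENNReal.rpow_mul, one_div, inv_mul_cancel₀ hq0.ne', ENNReal.rpow_one]
  rfl

lemma aesm_shift (hΩ : IsOpen Ω) (hu : AEStronglyMeasurable u (volume.restrict Ω))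
    (v : EuclideanSpace ℝ (Fin N)) :
    AEStronglyMeasurable (fun x => u (x + v))
      (volume.restrict ((fun x => x + v) ⁻¹' Ω)) :=
  hu.comp_measurePreserving
    ((measurePreserving_add_right volume v).restrict_preimage hΩ.measurableSet)

lemma phi_zero : phi Ω q u (0 : EuclideanSpace ℝ (Fin N)) = 0 := by
  have : (fun x : EuclideanSpace ℝ (Fin N) => u (x + 0) - u x) = fun _ => (0 : EuclideanSpace ℝ (Fin m)) := by
    funext x; simp
  simp [phi, this, eLpNorm_zero]

lemma sub_domSet (hconv : Convex ℝ Ω) {a b : ℝ} (ha : 0 ≤ a) (hb : 0 ≤ b)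
    (n : EuclideanSpace ℝ (Fin N)) :
    domSet Ω ((a + b) • n) ⊆ domSet Ω (a • n) := by
  rintro x ⟨hx1, hx2⟩
  refine ⟨hx1, ?_⟩
  show x + a • n ∈ Ω
  rcases eq_or_lt_of_le (add_nonneg ha hb : (0:ℝ) ≤ a + b) with hab | hab
  · have ha0 : a = 0 := le_antisymm (by linarith) ha
    simpa [ha0] using hx1
  · set t := a / (a + b) with ht
    have ht0 : 0 ≤ t := div_nonneg ha hab.le
    have ht1 : t ≤ 1 := by
      rw [div_le_one hab]; linarith
    have hmem := hconv hx1 hx2 (by linarith : (0:ℝ) ≤ 1 - t) ht0 (by ring)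
    have key : (1 - t) • x + t • (x + (a + b) • n) = x + a • n := by
      have htab : t * (a + b) = a := div_mul_cancel₀ a hab.ne'
      rw [smul_add, smul_smul, htab, sub_smul, one_smul]
      abel
    rwa [key] at hmem

lemma img_domSet (hconv : Convex ℝ Ω) {a b : ℝ} (ha : 0 ≤ a) (hb : 0 ≤ b)
    (n : EuclideanSpace ℝ (Fin N)) :
    (fun x => x + a • n) '' domSet Ω ((a + b) • n) ⊆ domSet Ω (b • n) := by
  rintro _ ⟨x, hx, rfl⟩
  refine ⟨(sub_domSet hconv ha hb n hx).2, ?_⟩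
  show x + a • n + b • n ∈ Ω
  rw [add_assoc, ← add_smul]
  exact hx.2

lemma phi_add (hΩ : IsOpen Ω) (hconv : Convex ℝ Ω) (hq : 1 ≤ q)
    (hu : AEStronglyMeasurable u (volume.restrict Ω))
    {a b : ℝ} (ha : 0 ≤ a) (hb : 0 ≤ b) (n : EuclideanSpace ℝ (Fin N)) :
    phi Ω q u ((a + b) • n) ≤ phi Ω q u (a • n) + phi Ω q u (b • n) := by
  have hq0 : 0 < q := lt_of_lt_of_le zero_lt_one hq
  have hp0 : (ENNReal.ofReal q) ≠ 0 := by simp [ENNReal.ofReal_pos.2 hq0, ne_of_gt]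
  have hpt : (ENNReal.ofReal q) ≠ ⊤ := ENNReal.ofReal_ne_top
  set A := domSet Ω ((a + b) • n) with hA
  have hAmeas : MeasurableSet A := meas_domSet hΩ _
  set f₁ : EuclideanSpace ℝ (Fin N) → EuclideanSpace ℝ (Fin m) :=
    fun x => u (x + a • n) - u x with hf₁
  set f₂ : EuclideanSpace ℝ (Fin N) → EuclideanSpace ℝ (Fin m) :=
    fun x => u (x + (a + b) • n) - u (x + a • n) with hf₂
  have hsplit : A.indicator (fun x => u (x + (a + b) • n) - u x)
      = A.indicator f₁ + A.indicator f₂ := by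
    funext x
    by_cases hx : x ∈ A
    · simp only [Set.indicator_of_mem hx, Pi.add_apply, hf₁, hf₂]
      abel
    · simp [Set.indicator_of_notMem hx]
  have hres1 : volume.restrict A ≤ volume.restrict ((fun x => x + a • n) ⁻¹' Ω) :=
    Measure.restrict_mono ((sub_domSet hconv ha hb n).trans Set.inter_subset_right) le_rfl
  have hres0 : volume.restrict A ≤ volume.restrict Ω :=
    Measure.restrict_mono Set.inter_subset_left le_rfl
  have hres2 : volume.restrict A ≤ volume.restrict ((fun x => x + (a + b) • n) ⁻¹' Ω) :=
    Measure.restrict_mono Set.inter_subset_right le_rfl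
  have h1 : AEStronglyMeasurable (A.indicator f₁) volume := by
    rw [aestronglyMeasurable_indicator_iff hAmeas]
    exact ((aesm_shift hΩ hu (a • n)).mono_measure hres1).sub (hu.mono_measure hres0)
  have h2 : AEStronglyMeasurable (A.indicator f₂) volume := by
    rw [aestronglyMeasurable_indicator_iff hAmeas]
    exact ((aesm_shift hΩ hu ((a + b) • n)).mono_measure hres2).sub
      ((aesm_shift hΩ hu (a • n)).mono_measure hres1)
  have hb1 : eLpNorm (A.indicator f₁) (ENNReal.ofReal q) volume ≤ phi Ω q u (a • n) := by
    rw [eLpNorm_indicator_eq_eLpNorm_restrict hAmeas, phi,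
      eLpNorm_indicator_eq_eLpNorm_restrict (meas_domSet hΩ _)]
    exact eLpNorm_mono_measure _
      (Measure.restrict_mono (sub_domSet hconv ha hb n) le_rfl)
  have hb2 : eLpNorm (A.indicator f₂) (ENNReal.ofReal q) volume ≤ phi Ω q u (b • n) := by
    rw [eLpNorm_indicator_eq_eLpNorm_restrict hAmeas,
      eLpNorm_eq_lintegral_rpow_enorm_toReal hp0 hpt, ENNReal.toReal_ofReal hq0.le]
    have hcomp : ∀ x, f₂ x = u ((x + a • n) + b • n) - u (x + a • n) := by
      intro x; rw [hf₂, add_assoc, ← add_smul]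
    have hchg : (∫⁻ x in A, (‖f₂ x‖₊ : ℝ≥0∞) ^ q ∂volume)
        = ∫⁻ y in (fun x => x + a • n) '' A, (‖u (y + b • n) - u y‖₊ : ℝ≥0∞) ^ q ∂volume := by
      rw [← (measurePreserving_add_right volume (a • n)).setLIntegral_comp_emb
        (MeasurableEquiv.addRight (a • n)).measurableEmbedding
        (fun y => (‖u (y + b • n) - u y‖₊ : ℝ≥0∞) ^ q) A]
      congr 1
      funext x
      rw [hcomp x]
    have hle : (∫⁻ x in A, (‖f₂ x‖₊ : ℝ≥0∞) ^ q ∂volume) ≤ phi Ω q u (b • n) ^ q := by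
      rw [hchg, phi_pow_eq hΩ hq]
      exact lintegral_mono' (Measure.restrict_mono (img_domSet hconv ha hb n) le_rfl) le_rfl
    calc (∫⁻ x in A, (‖f₂ x‖₊ : ℝ≥0∞) ^ q ∂volume) ^ (1/q)
        ≤ (phi Ω q u (b • n) ^ q) ^ (1/q) := ENNReal.rpow_le_rpow hle (by positivity)
      _ = phi Ω q u (b • n) := by
          rw [← ENNReal.rpow_mul, mul_one_div, div_self hq0.ne', ENNReal.rpow_one]
  calc phi Ω q u ((a + b) • n)
      = eLpNorm (A.indicator f₁ + A.indicator f₂) (ENNReal.ofReal q) volume := by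
        rw [phi, hsplit]
    _ ≤ eLpNorm (A.indicator f₁) (ENNReal.ofReal q) volume
        + eLpNorm (A.indicator f₂) (ENNReal.ofReal q) volume :=
        eLpNorm_add_le h1 h2 (by rwa [ENNReal.one_le_ofReal])
    _ ≤ _ := add_le_add hb1 hb2

lemma phi_nsmul (hΩ : IsOpen Ω) (hconv : Convex ℝ Ω) (hq : 1 ≤ q)
    (hu : AEStronglyMeasurable u (volume.restrict Ω))
    (k : ℕ) {ε : ℝ} (hε : 0 ≤ ε) (n : EuclideanSpace ℝ (Fin N)) :
    phi Ω q u (((k : ℝ) * ε) • n) ≤ (k : ℝ≥0∞) * phi Ω q u (ε • n) := by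
  induction k with
  | zero => simp [phi_zero]
  | succ k ih =>
      have : ((k : ℝ) + 1) * ε = (k : ℝ) * ε + ε := by ring
      rw [Nat.cast_succ, this]
      calc phi Ω q u (((k : ℝ) * ε + ε) • n)
          ≤ phi Ω q u (((k : ℝ) * ε) • n) + phi Ω q u (ε • n) :=
            phi_add hΩ hconv hq hu (by positivity) hε n
        _ ≤ (k : ℝ≥0∞) * phi Ω q u (ε • n) + phi Ω q u (ε • n) := add_le_add_left ih _
        _ = ((k : ℝ≥0∞) + 1) * phi Ω q u (ε • n) := by ring
      push_cast
      ring_nf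
      exact le_rfl


lemma inner_eq (hΩ : IsOpen Ω) (hq : 1 ≤ q) {ε : ℝ} (hε : 0 < ε)
    (n : EuclideanSpace ℝ (Fin N)) :
    (∫⁻ x in Ω, (Ω.indicator (fun _ => (1 : ℝ≥0∞)) (x + ε • n)) *
        ENNReal.ofReal (‖u (x + ε • n) - u x‖ ^ q / ε ^ q) ∂volume)
      = (ENNReal.ofReal (ε ^ q))⁻¹ * phi Ω q u (ε • n) ^ q := by
  have hq0 : 0 < q := lt_of_lt_of_le zero_lt_one hq
  have hεq : (0:ℝ) < ε ^ q := Real.rpow_pos_of_pos hε q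
  set pre := (fun x => x + ε • n) ⁻¹' Ω with hpre
  have hpremeas : MeasurableSet pre :=
    (hΩ.preimage (continuous_id.add continuous_const)).measurableSet
  have hpt : ∀ x, (Ω.indicator (fun _ => (1 : ℝ≥0∞)) (x + ε • n)) *
      ENNReal.ofReal (‖u (x + ε • n) - u x‖ ^ q / ε ^ q)
      = (ENNReal.ofReal (ε ^ q))⁻¹ *
        pre.indicator (fun x => (‖u (x + ε • n) - u x‖₊ : ℝ≥0∞) ^ q) x := by
    intro x
    by_cases hx : x ∈ pre
    · have hx' : x + ε • n ∈ Ω := hx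
      rw [Set.indicator_of_mem hx' , Set.indicator_of_mem hx, one_mul,
        ENNReal.ofReal_div_of_pos hεq, ENNReal.div_eq_inv_mul,
        ← ENNReal.ofReal_rpow_of_nonneg (norm_nonneg _) hq0.le, ofReal_norm, enorm_eq_nnnorm]
    · have hx' : x + ε • n ∉ Ω := hx
      rw [Set.indicator_of_notMem hx', Set.indicator_of_notMem hx, zero_mul, mul_zero]
  simp only [hpt]
  rw [lintegral_const_mul' _ _ (by simp [hεq]), lintegral_indicator hpremeas,
    Measure.restrict_restrict hpremeas, phi_pow_eq hΩ hq]
  congr 1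
  rw [domSet, Set.inter_comm]


lemma phi_le_big (hΩ : IsOpen Ω) (v : EuclideanSpace ℝ (Fin N)) :
    phi Ω q u v ≤ eLpNorm (fun x => Ω.indicator u (x + v) - Ω.indicator u x)
      (ENNReal.ofReal q) volume := by
  apply eLpNorm_mono
  intro x
  by_cases hx : x ∈ domSet Ω v
  · rw [Set.indicator_of_mem hx]
    have h1 : Ω.indicator u (x + v) = u (x + v) := Set.indicator_of_mem (show x + v ∈ Ω from hx.2) u
    have h2 : Ω.indicator u x = u x := Set.indicator_of_mem hx.1 u
    rw [h1, h2]
  · rw [Set.indicator_of_notMem hx, norm_zero]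
    exact norm_nonneg _

lemma weight_ineq {q : ℝ} (hq : 1 ≤ q) {w : ℝ} (hw0 : 0 < w) (hw1 : w < 1) (x y : ℝ≥0∞) :
    (x + y) ^ q ≤ ENNReal.ofReal (w ^ (1 - q)) * x ^ q
      + ENNReal.ofReal ((1 - w) ^ (1 - q)) * y ^ q := by
  have hq0 : 0 < q := lt_of_lt_of_le zero_lt_one hq
  set w₁ := ENNReal.ofReal w with hw₁
  set w₂ := ENNReal.ofReal (1 - w) with hw₂
  have hw₁0 : w₁ ≠ 0 := by simp [hw₁, ENNReal.ofReal_pos.2 hw0, ne_of_gt]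
  have hw₂0 : w₂ ≠ 0 := by simp [hw₂, ENNReal.ofReal_pos.2 (by linarith : (0:ℝ) < 1 - w), ne_of_gt]
  have hw₁t : w₁ ≠ ⊤ := ENNReal.ofReal_ne_top
  have hw₂t : w₂ ≠ ⊤ := ENNReal.ofReal_ne_top
  have hsum : w₁ + w₂ = 1 := by
    rw [hw₁, hw₂, ← ENNReal.ofReal_add hw0.le (by linarith)]
    norm_num
  have hx : w₁ * (x / w₁) = x := ENNReal.mul_div_cancel hw₁0 hw₁t
  have hy : w₂ * (y / w₂) = y := ENNReal.mul_div_cancel hw₂0 hw₂t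
  have key : (x + y) ^ q ≤ w₁ * (x / w₁) ^ q + w₂ * (y / w₂) ^ q := by
    conv_lhs => rw [← hx, ← hy]
    exact ENNReal.rpow_arith_mean_le_arith_mean2_rpow w₁ w₂ (x / w₁) (y / w₂) hsum hq
  have hterm : ∀ (a : ℝ≥0∞) (z : ℝ≥0∞), a ≠ 0 → a ≠ ⊤ →
      a * (z / a) ^ q = a ^ (1 - q) * z ^ q := by
    intro a z ha0 hat
    rw [ENNReal.div_rpow_of_nonneg _ _ hq0.le, ENNReal.rpow_sub _ _ ha0 hat,
      ENNReal.rpow_one, div_eq_mul_inv, div_eq_mul_inv]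
    ring
  rw [hterm w₁ x hw₁0 hw₁t, hterm w₂ y hw₂0 hw₂t] at key
  rw [hw₁, hw₂] at key
  rwa [ENNReal.ofReal_rpow_of_pos hw0, ENNReal.ofReal_rpow_of_pos (by linarith)] at key

lemma tendsto_big (hΩ : IsOpen Ω) (hq : 1 ≤ q)
    (hu : MemLp u (ENNReal.ofReal q) (volume.restrict Ω)) :
    Tendsto (fun v : EuclideanSpace ℝ (Fin N) =>
        eLpNorm (fun x => Ω.indicator u (x + v) - Ω.indicator u x) (ENNReal.ofReal q) volume)
      (𝓝 0) (𝓝 0) := by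
  set p := ENNReal.ofReal q with hp
  haveI : Fact (1 ≤ p) := ⟨ENNReal.one_le_ofReal.2 hq⟩
  have hpt : p ≠ ⊤ := ENNReal.ofReal_ne_top
  have hub : MemLp (Ω.indicator u) p volume :=
    (memLp_indicator_iff_restrict hΩ.measurableSet).2 hu
  set U := hub.toLp (Ω.indicator u) with hU
  set Fc : C(EuclideanSpace ℝ (Fin N) × EuclideanSpace ℝ (Fin N), EuclideanSpace ℝ (Fin N)) :=
    ⟨fun z => z.2 + z.1, by fun_prop⟩ with hFc
  have hmp : ∀ v : EuclideanSpace ℝ (Fin N),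
      MeasurePreserving (Fc.curry v) volume volume := fun v =>
    measurePreserving_add_right volume v
  set T : EuclideanSpace ℝ (Fin N) → Lp (EuclideanSpace ℝ (Fin m)) p volume :=
    fun v => Lp.compMeasurePreserving (Fc.curry v) (hmp v) U with hT
  have hTcont : Continuous T :=
    Continuous.compMeasurePreservingLp continuous_const Fc.curry.continuous hmp hpt
  have hkey : ∀ v : EuclideanSpace ℝ (Fin N),
      eLpNorm (fun x => Ω.indicator u (x + v) - Ω.indicator u x) p volume
        = edist (T v) (T 0) := by
    intro v
    rw [Lp.edist_def]
    refine (eLpNorm_congr_ae ?_).symm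
    have h1 : (T v : EuclideanSpace ℝ (Fin N) → EuclideanSpace ℝ (Fin m))
        =ᵐ[volume] fun x => Ω.indicator u (x + v) := by
      refine (Lp.coeFn_compMeasurePreserving U (hmp v)).trans ?_
      show (↑↑U ∘ fun x => x + v) =ᵐ[volume] (Ω.indicator u ∘ fun x => x + v)
      refine ae_eq_comp (f := fun x : EuclideanSpace ℝ (Fin N) => x + v)
        ((measurePreserving_add_right volume v).quasiMeasurePreserving).aemeasurable ?_
      rw [(measurePreserving_add_right volume v).map_eq]
      exact MemLp.coeFn_toLp hub
    have h0 : (T 0 : EuclideanSpace ℝ (Fin N) → EuclideanSpace ℝ (Fin m))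
        =ᵐ[volume] fun x => Ω.indicator u x := by
      refine (Lp.coeFn_compMeasurePreserving U (hmp 0)).trans ?_
      have heq : (Ω.indicator u ∘ fun x : EuclideanSpace ℝ (Fin N) => x + 0)
          = fun x => Ω.indicator u x := by
        funext x; simp
      rw [← heq]
      show (↑↑U ∘ fun x => x + 0) =ᵐ[volume] (Ω.indicator u ∘ fun x => x + 0)
      refine ae_eq_comp (f := fun x : EuclideanSpace ℝ (Fin N) => x + 0)
        ((measurePreserving_add_right volume (0 : EuclideanSpace ℝ (Fin N))).quasiMeasurePreserving).aemeasurable ?_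
      rw [(measurePreserving_add_right volume (0 : EuclideanSpace ℝ (Fin N))).map_eq]
      exact MemLp.coeFn_toLp hub
    filter_upwards [h1, h0] with x hx1 hx0
    simp only [Pi.sub_apply, hx1, hx0]
  have : Tendsto (fun v => edist (T v) (T 0)) (𝓝 0) (𝓝 (edist (T 0) (T 0))) :=
    ((hTcont.tendsto 0).edist tendsto_const_nhds)
  rw [edist_self] at this
  exact (Tendsto.congr (fun v => (hkey v).symm) this)


end Stmt12Aux

open Stmt12Aux


/-- for a convex open `Ω ⊆ ℝ^N` with negligible boundary and
`u ∈ L^q(Ω,ℝ^m)`, the spherical difference quotients converge as `ε → 0⁺` to their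
supremum over all `ε > 0` (the common value may be `+∞`). -/
theorem stmt_12 (N m : ℕ) (Ω : Set (EuclideanSpace ℝ (Fin N)))
    (hΩopen : IsOpen Ω) (hΩconv : Convex ℝ Ω) (hΩbdry : volume (frontier Ω) = 0)
    (q : ℝ) (hq : 1 ≤ q)
    (u : EuclideanSpace ℝ (Fin N) → EuclideanSpace ℝ (Fin m))
    (hu : MemLp u (ENNReal.ofReal q) (volume.restrict Ω)) :
    Filter.Tendsto
      (fun ε : ℝ =>
        ∫⁻ n in sphere (0 : EuclideanSpace ℝ (Fin N)) 1,
          (∫⁻ x in Ω,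
            (Ω.indicator (fun _ => (1 : ℝ≥0∞)) (x + ε • n)) *
              ENNReal.ofReal (‖u (x + ε • n) - u x‖ ^ q / ε ^ q))
          ∂(μH[(N : ℝ) - 1]))
      (𝓝[>] (0 : ℝ))
      (nhds
        (⨆ ε ∈ Set.Ioi (0 : ℝ),
          ∫⁻ n in sphere (0 : EuclideanSpace ℝ (Fin N)) 1,
            (∫⁻ x in Ω,
              (Ω.indicator (fun _ => (1 : ℝ≥0∞)) (x + ε • n)) *
                ENNReal.ofReal (‖u (x + ε • n) - u x‖ ^ q / ε ^ q))
            ∂(μH[(N : ℝ) - 1]))) := by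
  classical
  have hq0 : 0 < q := lt_of_lt_of_le zero_lt_one hq
  have hA : AEStronglyMeasurable u (volume.restrict Ω) := hu.1
  set S := sphere (0 : EuclideanSpace ℝ (Fin N)) 1 with hS
  set μ : Measure (EuclideanSpace ℝ (Fin N)) := μH[(N : ℝ) - 1] with hμ
  have hHS : μ S < ⊤ := Stmt12Haus.hausdorff_sphere_lt_top N
  set G : ℝ → ℝ≥0∞ := fun ε =>
    ∫⁻ n in S, (∫⁻ x in Ω, (Ω.indicator (fun _ => (1 : ℝ≥0∞)) (x + ε • n)) *
      ENNReal.ofReal (‖u (x + ε • n) - u x‖ ^ q / ε ^ q)) ∂μ with hG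
  set J : ℝ → ℝ≥0∞ := fun t => ∫⁻ n in S, phi Ω q u (t • n) ^ q ∂μ with hJ
  have hGJ : ∀ {ε : ℝ}, 0 < ε → G ε = (ENNReal.ofReal (ε ^ q))⁻¹ * J ε := by
    intro ε hε
    simp only [hG, hJ]
    rw [← lintegral_const_mul' _ _
      (by simp [Real.rpow_pos_of_pos hε] : (ENNReal.ofReal (ε ^ q))⁻¹ ≠ ⊤)]
    exact lintegral_congr fun n => inner_eq hΩopen hq hε n
  have key : ∀ δ ∈ Set.Ioi (0:ℝ), G δ ≤ Filter.liminf G (𝓝[>] (0:ℝ)) := by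
    intro δ hδ
    rw [Set.mem_Ioi] at hδ
    set L := Filter.liminf G (𝓝[>] (0:ℝ)) with hL
    have hδq : (0:ℝ) < δ ^ q := Real.rpow_pos_of_pos hδ q
    have step1 : ∀ w : ℝ, 0 < w → w < 1 → ∀ η : ℝ≥0∞, η ≠ 0 →
        G δ ≤ ENNReal.ofReal (w ^ (1 - q)) * L + η := by
      intro w hw0 hw1 η hη
      by_cases hηt : η = ⊤
      · rw [hηt, add_top]; exact le_top
      set W₁ := ENNReal.ofReal (w ^ (1 - q)) with hW₁
      set W₂ := ENNReal.ofReal ((1 - w) ^ (1 - q)) with hW₂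
      have hW₁0 : W₁ ≠ 0 := by
        simp [hW₁, ne_of_gt, ENNReal.ofReal_pos.2 (Real.rpow_pos_of_pos hw0 _)]
      have hW₁t : W₁ ≠ ⊤ := ENNReal.ofReal_ne_top
      have hW₂t : W₂ ≠ ⊤ := ENNReal.ofReal_ne_top
      set C := W₂ * μ S * (ENNReal.ofReal (δ ^ q))⁻¹ + 1 with hC
      have hC0 : C ≠ 0 := by simp [hC]
      have hCt : C ≠ ⊤ := by
        rw [hC]
        refine ENNReal.add_ne_top.2 ⟨?_, ENNReal.one_ne_top⟩
        exact ENNReal.mul_ne_top (ENNReal.mul_ne_top hW₂t hHS.ne)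
          (by simp [ne_of_gt, ENNReal.ofReal_pos.2 hδq])
      set θ := η / C with hθ
      have hθ0 : θ ≠ 0 := by
        simp [hθ, ENNReal.div_eq_zero_iff, hη, hCt]
      set θ₁ := (min θ 1) ^ (1/q) with hθ₁
      have hθ₁0 : 0 < θ₁ := by
        apply ENNReal.rpow_pos (lt_min (zero_lt_iff.2 hθ0) zero_lt_one)
        exact ne_top_of_le_ne_top ENNReal.one_ne_top (min_le_right _ _)
      have hθ₁q : θ₁ ^ q ≤ θ := by
        rw [hθ₁, ← ENNReal.rpow_mul, one_div, inv_mul_cancel₀ hq0.ne', ENNReal.rpow_one]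
        exact min_le_left _ _
      have hev0 := (tendsto_big hΩopen hq hu).eventually_lt_const hθ₁0
      obtain ⟨ρ, hρ0, hρ⟩ := Metric.eventually_nhds_iff.1 hev0
      have hev : ∀ᶠ ε in 𝓝[>] (0:ℝ), G δ ≤ W₁ * G ε + η := by
        filter_upwards [Ioo_mem_nhdsGT_of_mem
          (⟨le_refl (0:ℝ), lt_min hδ hρ0⟩ : (0:ℝ) ∈ Set.Ico 0 (min δ ρ))] with ε hε
        obtain ⟨hε0, hεlt⟩ := hε
        have hεδ : ε ≤ δ := le_of_lt (lt_of_lt_of_le hεlt (min_le_left _ _))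
        have hερ : ε < ρ := lt_of_lt_of_le hεlt (min_le_right _ _)
        set k := ⌊δ / ε⌋₊ with hk
        have hk1 : 1 ≤ k := by
          apply Nat.le_floor
          rw [Nat.cast_one, le_div_iff₀ hε0, one_mul]
          exact hεδ
        have hkR : (0:ℝ) < (k : ℝ) := by exact_mod_cast Nat.lt_of_lt_of_le Nat.zero_lt_one hk1
        have hkε : (k:ℝ) * ε ≤ δ := by
          rw [← le_div_iff₀ hε0]
          exact Nat.floor_le (le_of_lt (div_pos hδ hε0))
        set r := δ - (k:ℝ) * ε with hr
        have hr0 : 0 ≤ r := by rw [hr]; linarith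
        have hrε : r < ε := by
          have h2 : δ / ε < (k:ℝ) + 1 := by
            have := Nat.lt_succ_floor (δ / ε)
            push_cast at this
            exact this
          rw [div_lt_iff₀ hε0] at h2
          rw [hr]; nlinarith
        have hptn : ∀ n ∈ S, phi Ω q u (δ • n) ^ q
            ≤ W₁ * (k:ℝ≥0∞) ^ q * phi Ω q u (ε • n) ^ q + W₂ * θ := by
          intro n hn
          have hδr : δ = (k:ℝ) * ε + r := by rw [hr]; ring
          have h1 : phi Ω q u (δ • n) ≤ (k:ℝ≥0∞) * phi Ω q u (ε • n) + phi Ω q u (r • n) := by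
            calc phi Ω q u (δ • n) = phi Ω q u (((k:ℝ) * ε + r) • n) := by rw [← hδr]
              _ ≤ phi Ω q u (((k:ℝ) * ε) • n) + phi Ω q u (r • n) :=
                  phi_add hΩopen hΩconv hq hA (by positivity) hr0 n
              _ ≤ _ := add_le_add_left (phi_nsmul hΩopen hΩconv hq hA k hε0.le n) _
          have h2 : phi Ω q u (r • n) ^ q ≤ θ := by
            have hnr : dist (r • n) 0 < ρ := by
              rw [dist_zero_right, norm_smul, Real.norm_eq_abs, abs_of_nonneg hr0,
                mem_sphere_zero_iff_norm.1 hn, mul_one]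
              exact lt_trans hrε hερ
            have hsmall := hρ hnr
            have hle := phi_le_big (u := u) (q := q) hΩopen (r • n)
            calc phi Ω q u (r • n) ^ q ≤ θ₁ ^ q :=
                ENNReal.rpow_le_rpow (le_of_lt (lt_of_le_of_lt hle hsmall)) hq0.le
              _ ≤ θ := hθ₁q
          calc phi Ω q u (δ • n) ^ q
              ≤ ((k:ℝ≥0∞) * phi Ω q u (ε • n) + phi Ω q u (r • n)) ^ q :=
                ENNReal.rpow_le_rpow h1 hq0.le
            _ ≤ W₁ * ((k:ℝ≥0∞) * phi Ω q u (ε • n)) ^ q + W₂ * phi Ω q u (r • n) ^ q :=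
                weight_ineq hq hw0 hw1 _ _
            _ = W₁ * ((k:ℝ≥0∞) ^ q * phi Ω q u (ε • n) ^ q) + W₂ * phi Ω q u (r • n) ^ q := by
                rw [ENNReal.mul_rpow_of_nonneg _ _ hq0.le]
            _ ≤ W₁ * (k:ℝ≥0∞) ^ q * phi Ω q u (ε • n) ^ q + W₂ * θ := by
                rw [← mul_assoc]
                exact add_le_add_right (mul_le_mul_right h2 _) _
        have hkqt : W₁ * (k:ℝ≥0∞) ^ q ≠ ⊤ :=
          ENNReal.mul_ne_top hW₁t
            (ENNReal.rpow_ne_top_of_nonneg hq0.le (ENNReal.natCast_ne_top k))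
        have hint : J δ ≤ W₁ * (k:ℝ≥0∞) ^ q * J ε + W₂ * θ * μ S := by
          have hmono : J δ ≤ ∫⁻ n in S,
              (W₁ * (k:ℝ≥0∞) ^ q * phi Ω q u (ε • n) ^ q + W₂ * θ) ∂μ :=
            lintegral_mono_ae (ae_restrict_of_forall_mem (isClosed_sphere).measurableSet hptn)
          refine le_trans hmono (le_of_eq ?_)
          rw [lintegral_add_right _ measurable_const,
            lintegral_const_mul' _ _ hkqt, lintegral_const]
          rw [Measure.restrict_apply_univ]
        have hinv : (k:ℝ≥0∞) ^ q * (ENNReal.ofReal (δ ^ q))⁻¹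
            ≤ (ENNReal.ofReal (ε ^ q))⁻¹ := by
          have hkof : ((k:ℝ≥0∞)) ^ q = ENNReal.ofReal ((k:ℝ) ^ q) := by
            rw [← ENNReal.ofReal_natCast k, ENNReal.ofReal_rpow_of_pos hkR]
          have hk0' : ENNReal.ofReal ((k:ℝ) ^ q) ≠ 0 := by
            simp [ne_of_gt, ENNReal.ofReal_pos.2 (Real.rpow_pos_of_pos hkR q)]
          have hmul : ENNReal.ofReal ((k:ℝ) ^ q) * ENNReal.ofReal (ε ^ q)
              ≤ ENNReal.ofReal (δ ^ q) := by
            rw [← ENNReal.ofReal_mul (by positivity), ← Real.mul_rpow hkR.le hε0.le]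
            exact ENNReal.ofReal_le_ofReal (Real.rpow_le_rpow (by positivity) hkε hq0.le)
          rw [hkof]
          calc ENNReal.ofReal ((k:ℝ) ^ q) * (ENNReal.ofReal (δ ^ q))⁻¹
              ≤ ENNReal.ofReal ((k:ℝ) ^ q)
                * (ENNReal.ofReal ((k:ℝ) ^ q) * ENNReal.ofReal (ε ^ q))⁻¹ :=
                mul_le_mul_right (ENNReal.inv_le_inv.2 hmul) _
            _ = ENNReal.ofReal ((k:ℝ) ^ q)
                * ((ENNReal.ofReal ((k:ℝ) ^ q))⁻¹ * (ENNReal.ofReal (ε ^ q))⁻¹) := by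
                rw [ENNReal.mul_inv (Or.inl hk0') (Or.inl ENNReal.ofReal_ne_top)]
            _ = (ENNReal.ofReal ((k:ℝ) ^ q) * (ENNReal.ofReal ((k:ℝ) ^ q))⁻¹)
                * (ENNReal.ofReal (ε ^ q))⁻¹ := by ring
            _ = (ENNReal.ofReal (ε ^ q))⁻¹ := by
                rw [ENNReal.mul_inv_cancel hk0' ENNReal.ofReal_ne_top, one_mul]
        have hE : W₂ * θ * μ S * (ENNReal.ofReal (δ ^ q))⁻¹ ≤ η := by
          have h3 : W₂ * θ * μ S * (ENNReal.ofReal (δ ^ q))⁻¹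
              = θ * (W₂ * μ S * (ENNReal.ofReal (δ ^ q))⁻¹) := by ring
          have h4 : W₂ * μ S * (ENNReal.ofReal (δ ^ q))⁻¹ ≤ C := by
            rw [hC]; exact self_le_add_right _ _
          have h5 : θ * C = η := by
            rw [hθ]; exact ENNReal.div_mul_cancel hC0 hCt
          rw [h3, ← h5]
          exact mul_le_mul_right h4 _
        calc G δ = (ENNReal.ofReal (δ ^ q))⁻¹ * J δ := hGJ hδ
          _ ≤ (ENNReal.ofReal (δ ^ q))⁻¹ * (W₁ * (k:ℝ≥0∞) ^ q * J ε + W₂ * θ * μ S) :=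
              mul_le_mul_right hint _
          _ = W₁ * ((k:ℝ≥0∞) ^ q * (ENNReal.ofReal (δ ^ q))⁻¹) * J ε
              + W₂ * θ * μ S * (ENNReal.ofReal (δ ^ q))⁻¹ := by ring
          _ ≤ W₁ * (ENNReal.ofReal (ε ^ q))⁻¹ * J ε
              + W₂ * θ * μ S * (ENNReal.ofReal (δ ^ q))⁻¹ := by
              exact add_le_add_left (mul_le_mul_left (mul_le_mul_right hinv _) _) _
          _ = W₁ * G ε + W₂ * θ * μ S * (ENNReal.ofReal (δ ^ q))⁻¹ := by
              rw [hGJ hε0]; ring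
          _ ≤ W₁ * G ε + η := add_le_add_right hE _
      set b := (G δ - η) / W₁ with hb
      have hbL : b ≤ L := by
        rw [hL]
        refine Filter.le_liminf_of_le (by isBoundedDefault) ?_
        filter_upwards [hev] with ε hε
        rw [hb, ENNReal.div_le_iff hW₁0 hW₁t, tsub_le_iff_right]
        calc G δ ≤ W₁ * G ε + η := hε
          _ = G ε * W₁ + η := by ring
      calc G δ ≤ (G δ - η) + η := le_tsub_add
        _ = W₁ * b + η := by rw [hb, ENNReal.mul_div_cancel hW₁0 hW₁t]
        _ ≤ W₁ * L + η := add_le_add_left (mul_le_mul_right hbL _) _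
    have step2 : ∀ w : ℝ, 0 < w → w < 1 → G δ ≤ ENNReal.ofReal (w ^ (1 - q)) * L := by
      intro w hw0 hw1
      refine ENNReal.le_of_forall_pos_le_add fun η hη _ => ?_
      exact step1 w hw0 hw1 η (by exact_mod_cast ENNReal.coe_ne_zero.2 (ne_of_gt hη))
    by_cases hLtop : L = ⊤
    · rw [hLtop]; exact le_top
    have htw : Tendsto (fun w : ℝ => ENNReal.ofReal (w ^ (1 - q)) * L)
        (𝓝[<] (1:ℝ)) (𝓝 L) := by
      have h1 : Tendsto (fun w : ℝ => w ^ (1 - q)) (𝓝 1) (𝓝 1) := by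
        have hc := (Real.continuousAt_rpow_const 1 (1 - q) (Or.inl one_ne_zero))
        have := hc.tendsto
        rwa [Real.one_rpow] at this
      have h2 : Tendsto (fun w : ℝ => ENNReal.ofReal (w ^ (1 - q))) (𝓝 1) (𝓝 1) := by
        have := (ENNReal.continuous_ofReal.tendsto 1).comp h1
        simpa [Function.comp_def] using this
      have h3 := ENNReal.Tendsto.mul_const (h2.mono_left (nhdsWithin_le_nhds : 𝓝[Set.Iio (1:ℝ)] 1 ≤ 𝓝 1))
        (Or.inr hLtop)
      simpa using h3
    refine ge_of_tendsto htw ?_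
    filter_upwards [Ioo_mem_nhdsLT_of_mem
      (⟨zero_lt_one, le_refl (1:ℝ)⟩ : (1:ℝ) ∈ Set.Ioc 0 1)] with w hw
    exact step2 w hw.1 hw.2
  have hsupG : (⨆ ε ∈ Set.Ioi (0:ℝ), G ε) ≤ Filter.liminf G (𝓝[>] (0:ℝ)) :=
    iSup₂_le key
  have hlimsup : Filter.limsup G (𝓝[>] (0:ℝ)) ≤ ⨆ ε ∈ Set.Ioi (0:ℝ), G ε := by
    refine Filter.limsup_le_of_le (by isBoundedDefault) ?_
    filter_upwards [self_mem_nhdsWithin] with ε hε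
    exact le_biSup _ hε
  have h1 : Filter.liminf G (𝓝[>] (0:ℝ)) ≤ Filter.limsup G (𝓝[>] (0:ℝ)) :=
    Filter.liminf_le_limsup
  exact tendsto_of_liminf_eq_limsup
    (le_antisymm (h1.trans hlimsup) hsupG)
    (le_antisymm hlimsup (hsupG.trans h1))
end
end

section
/- Let Ω ⊂ ℝ^N be an open set, q ≥ 1, and u ∈ L^q_loc(Ω, ℝ^m). Then for every open Ω₁ ⊂⊂ Ω₂ ⊂⊂ Ω, every k ∈ S^{N-1}, and every ε with 0 < ε < min{dist(Ω₁, ℝ^N \ Ω₂), dist(Ω₂, ℝ^N \ Ω)}, one has ∫_{cl Ω₁} (1/ε) |u(x+εk)−u(x)|^q dx ≤ (2^{N+q} / L^N(B₁(0))) ∫_{B₁(0)} ∫_{cl Ω₂} (1/(ε|z|)) |u(x+εz)−u(x)|^q dx dz. -/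
open MeasureTheory Metric Set Filter ENNReal
open scoped Topology

noncomputable section

private lemma rpow_add_le_aux {a b p : ℝ} (ha : 0 ≤ a) (hb : 0 ≤ b) (hp : 1 ≤ p) :
    (a + b) ^ p ≤ 2 ^ (p - 1) * (a ^ p + b ^ p) := by
  have h := NNReal.coe_le_coe.mpr (NNReal.rpow_add_le_mul_rpow_add_rpow a.toNNReal b.toNNReal hp)
  push_cast at h
  rwa [Real.coe_toNNReal a ha, Real.coe_toNNReal b hb] at h

set_option maxHeartbeats 2000000 in
/-- averaging bound: for `u ∈ L^q_loc(Ω,ℝ^m)`, nested open sets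
`Ω₁ ⊂⊂ Ω₂ ⊂⊂ Ω`, a unit vector `k` and
`0 < ε < min{dist(Ω₁, ℝ^N∖Ω₂), dist(Ω₂, ℝ^N∖Ω)}`,
`∫_{cl Ω₁} |u(x+εk)-u(x)|^q/ε dx
  ≤ (2^{N+q}/L^N(B₁(0))) ∫_{B₁(0)} ∫_{cl Ω₂} |u(x+εz)-u(x)|^q/(ε|z|) dx dz`. -/
theorem stmt_16 (N m : ℕ) (Ω : Set (EuclideanSpace ℝ (Fin N))) (hΩopen : IsOpen Ω)
    (q : ℝ) (hq : 1 ≤ q)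
    (u : EuclideanSpace ℝ (Fin N) → EuclideanSpace ℝ (Fin m))
    (hu : ∀ K : Set (EuclideanSpace ℝ (Fin N)), IsCompact K → K ⊆ Ω →
      MemLp u (ENNReal.ofReal q) (volume.restrict K))
    (Ω₁ Ω₂ : Set (EuclideanSpace ℝ (Fin N)))
    (hΩ₁open : IsOpen Ω₁) (hΩ₂open : IsOpen Ω₂)
    (hΩ₁cpt : IsCompact (closure Ω₁)) (hΩ₂cpt : IsCompact (closure Ω₂))
    (hΩ₁₂ : closure Ω₁ ⊆ Ω₂) (hΩ₂Ω : closure Ω₂ ⊆ Ω)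
    (k : EuclideanSpace ℝ (Fin N)) (hk : ‖k‖ = 1)
    (ε : ℝ) (hε : 0 < ε)
    (hε₁ : ENNReal.ofReal ε < ⨅ x ∈ Ω₁, EMetric.infEdist x Ω₂ᶜ)
    (hε₂ : ENNReal.ofReal ε < ⨅ x ∈ Ω₂, EMetric.infEdist x Ωᶜ) :
    (∫⁻ x in closure Ω₁, ENNReal.ofReal (‖u (x + ε • k) - u x‖ ^ q / ε)) ≤
      (ENNReal.ofReal (2 ^ ((N : ℝ) + q)) /
          volume (ball (0 : EuclideanSpace ℝ (Fin N)) 1)) *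
        ∫⁻ z in ball (0 : EuclideanSpace ℝ (Fin N)) 1,
          ∫⁻ x in closure Ω₂,
            ENNReal.ofReal (‖u (x + ε • z) - u x‖ ^ q / (ε * ‖z‖)) := by
  classical
  have hk0 : k ≠ 0 := by
    intro h; rw [h, norm_zero] at hk; norm_num at hk
  haveI : Nontrivial (EuclideanSpace ℝ (Fin N)) := nontrivial_of_ne k 0 hk0
  have hq0 : (0:ℝ) ≤ q := le_trans zero_le_one hq
  -- distance estimates extend to closures
  have hdgen : ∀ (A T : Set (EuclideanSpace ℝ (Fin N))),
      ∀ x ∈ closure A, (⨅ y ∈ A, EMetric.infEdist y T) ≤ EMetric.infEdist x T := by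
    intro A T
    have hcl : IsClosed {x : EuclideanSpace ℝ (Fin N) |
        (⨅ y ∈ A, EMetric.infEdist y T) ≤ EMetric.infEdist x T} :=
      isClosed_le continuous_const EMetric.continuous_infEdist
    have hsub : A ⊆ {x : EuclideanSpace ℝ (Fin N) |
        (⨅ y ∈ A, EMetric.infEdist y T) ≤ EMetric.infEdist x T} :=
      fun y hy => biInf_le (fun y => EMetric.infEdist y T) hy
    exact fun x hx => closure_minimal hsub hcl hx
  have hd₁ := hdgen Ω₁ Ω₂ᶜ
  have hd₂ := hdgen Ω₂ Ωᶜ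
  have hedist : ∀ (x w : EuclideanSpace ℝ (Fin N)), ‖w‖ ≤ 1 →
      edist x (x + ε • w) ≤ ENNReal.ofReal ε := by
    intro x w hw
    rw [edist_dist, dist_self_add_right, norm_smul, Real.norm_eq_abs, abs_of_pos hε]
    exact ENNReal.ofReal_le_ofReal (by nlinarith)
  have key₁ : ∀ x ∈ closure Ω₁, ∀ w : EuclideanSpace ℝ (Fin N), ‖w‖ ≤ 1 → x + ε • w ∈ Ω₂ := by
    intro x hx w hw
    by_contra hmem
    exact ((EMetric.infEdist_le_edist_of_mem (s := Ω₂ᶜ) hmem).trans (hedist x w hw)).not_gt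
      (hε₁.trans_le (hd₁ x hx))
  -- the enlarged compact set
  set K' : Set (EuclideanSpace ℝ (Fin N)) := cthickening ε (closure Ω₂) with hK'def
  have hK'cpt : IsCompact K' := hΩ₂cpt.cthickening
  have hK'meas : MeasurableSet K' := hK'cpt.isClosed.measurableSet
  have hK'Ω : K' ⊆ Ω := by
    intro y hy
    by_contra hyΩ
    have h1 : EMetric.infEdist y (closure Ω₂) ≤ ENNReal.ofReal ε := mem_cthickening_iff.mp hy
    have h2 : (⨅ z ∈ Ω₂, EMetric.infEdist z Ωᶜ) ≤ EMetric.infEdist y (closure Ω₂) := by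
      refine Metric.le_infEDist.mpr ?_
      intro x hx
      calc (⨅ z ∈ Ω₂, EMetric.infEdist z Ωᶜ) ≤ EMetric.infEdist x Ωᶜ := hd₂ x hx
        _ ≤ edist x y := EMetric.infEdist_le_edist_of_mem (s := Ωᶜ) hyΩ
        _ = edist y x := edist_comm x y
    exact absurd ((hε₂.trans_le h2).trans_le h1) (lt_irrefl _)
  have key₃ : ∀ x ∈ closure Ω₂, ∀ w : EuclideanSpace ℝ (Fin N), ‖w‖ ≤ 1 → x + ε • w ∈ K' := by
    intro x hx w hw
    rw [hK'def, mem_cthickening_iff]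
    refine le_trans (EMetric.infEdist_le_edist_of_mem hx) ?_
    rw [edist_comm]
    exact hedist x w hw
  have hcl₂K' : closure Ω₂ ⊆ K' := self_subset_cthickening _
  have hcl₁K' : closure Ω₁ ⊆ K' := (hΩ₁₂.trans subset_closure).trans hcl₂K'
  have h1m : MeasurableSet (closure Ω₁) := isClosed_closure.measurableSet
  have h2m : MeasurableSet (closure Ω₂) := isClosed_closure.measurableSet
  -- a measurable version of u
  have huK := (hu K' hK'cpt hK'Ω).aestronglyMeasurable
  set v : EuclideanSpace ℝ (Fin N) → EuclideanSpace ℝ (Fin m) := huK.mk u with hvdef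
  have hvm : StronglyMeasurable v := huK.stronglyMeasurable_mk
  have huv : u =ᵐ[volume.restrict K'] v := huK.ae_eq_mk
  have hnull : volume {x | x ∈ K' ∧ u x ≠ v x} = 0 := by
    have h := (ae_restrict_iff' hK'meas).mp huv
    rw [ae_iff] at h
    have hset : {x | ¬ (x ∈ K' → u x = v x)} = {x | x ∈ K' ∧ u x ≠ v x} := by
      ext x; simp [Classical.not_imp]
    rwa [hset] at h
  have hshift : ∀ (c : EuclideanSpace ℝ (Fin N)) (s : Set (EuclideanSpace ℝ (Fin N))),
      MeasurableSet s → (∀ x ∈ s, x + c ∈ K') →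
      ∀ᵐ x ∂volume.restrict s, u (x + c) = v (x + c) := by
    intro c s hs hsub
    have hpre : volume ((fun x => x + c) ⁻¹' {x | x ∈ K' ∧ u x ≠ v x}) = 0 :=
      (measurePreserving_add_right volume c).quasiMeasurePreserving.preimage_null hnull
    have h1 : ∀ᵐ x ∂(volume : Measure (EuclideanSpace ℝ (Fin N))),
        ¬ (x + c ∈ K' ∧ u (x + c) ≠ v (x + c)) := by
      rw [ae_iff]
      have : {x | ¬¬(x + c ∈ K' ∧ u (x + c) ≠ v (x + c))}
          = (fun x => x + c) ⁻¹' {y | y ∈ K' ∧ u y ≠ v y} := by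
        ext x; simp [not_not]
      rwa [this]
    filter_upwards [ae_restrict_of_ae h1, ae_restrict_mem hs] with x hx hxs
    by_contra hne
    exact hx ⟨hsub x hxs, hne⟩
  -- replace u by v in both sides
  have hLHS : (∫⁻ x in closure Ω₁, ENNReal.ofReal (‖u (x + ε • k) - u x‖ ^ q / ε))
      = ∫⁻ x in closure Ω₁, ENNReal.ofReal (‖v (x + ε • k) - v x‖ ^ q / ε) := by
    apply lintegral_congr_ae
    filter_upwards [ae_restrict_of_ae_restrict_of_subset hcl₁K' huv,
      hshift (ε • k) (closure Ω₁) h1m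
        (fun x hx => hcl₂K' (subset_closure (key₁ x hx k hk.le)))] with x h1 h2
    rw [h1, h2]
  have hRHS : (∫⁻ z in ball (0 : EuclideanSpace ℝ (Fin N)) 1, ∫⁻ x in closure Ω₂,
        ENNReal.ofReal (‖u (x + ε • z) - u x‖ ^ q / (ε * ‖z‖)))
      = ∫⁻ z in ball (0 : EuclideanSpace ℝ (Fin N)) 1, ∫⁻ x in closure Ω₂,
        ENNReal.ofReal (‖v (x + ε • z) - v x‖ ^ q / (ε * ‖z‖)) := by
    apply lintegral_congr_ae
    filter_upwards [ae_restrict_mem measurableSet_ball] with z hz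
    apply lintegral_congr_ae
    filter_upwards [ae_restrict_of_ae_restrict_of_subset hcl₂K' huv,
      hshift (ε • z) (closure Ω₂) h2m
        (fun x hx => key₃ x hx z (mem_ball_zero_iff.mp hz).le)] with x h1 h2
    rw [h1, h2]
  rw [hLHS, hRHS]
  -- now everything is in terms of the measurable function v
  clear hLHS hRHS hshift hnull huv hu
  have hvm' : Measurable v := hvm.measurable
  have hrpow : Measurable fun t : ℝ => t ^ q := (Real.continuous_rpow_const hq0).measurable
  set B1 : Set (EuclideanSpace ℝ (Fin N)) := ball 0 1 with hB1
  set S : Set (EuclideanSpace ℝ (Fin N)) := ball ((2:ℝ)⁻¹ • k) 2⁻¹ with hSdef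
  have hSm : MeasurableSet S := measurableSet_ball
  have hcnorm : ‖(2:ℝ)⁻¹ • k‖ = 2⁻¹ := by
    rw [norm_smul, hk, mul_one, Real.norm_eq_abs]; norm_num
  have hSnorm : ∀ z ∈ S, 0 < ‖z‖ ∧ ‖z‖ < 1 := by
    intro z hz
    rw [hSdef, mem_ball, dist_eq_norm] at hz
    constructor
    · have h1 : ‖(2:ℝ)⁻¹ • k‖ ≤ ‖(2:ℝ)⁻¹ • k - z‖ + ‖z‖ := by
        calc ‖(2:ℝ)⁻¹ • k‖ = ‖((2:ℝ)⁻¹ • k - z) + z‖ := by rw [sub_add_cancel]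
          _ ≤ _ := norm_add_le _ _
      rw [norm_sub_rev, hcnorm] at h1
      linarith
    · have h1 : ‖z‖ ≤ ‖z - (2:ℝ)⁻¹ • k‖ + ‖(2:ℝ)⁻¹ • k‖ := by
        calc ‖z‖ = ‖(z - (2:ℝ)⁻¹ • k) + (2:ℝ)⁻¹ • k‖ := by rw [sub_add_cancel]
          _ ≤ _ := norm_add_le _ _
      rw [hcnorm] at h1; linarith
  have hSsub : S ⊆ B1 := fun z hz => by
    rw [hB1, mem_ball_zero_iff]; exact (hSnorm z hz).2
  have hSrefl : ∀ z ∈ S, k - z ∈ S := by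
    intro z hz
    rw [hSdef, mem_ball, dist_eq_norm] at hz ⊢
    have h : k - z - (2:ℝ)⁻¹ • k = (2:ℝ)⁻¹ • k - z := by module
    rw [h, norm_sub_rev]
    exact hz
  have himg : (fun z => k - z) '' S = S := by
    apply Subset.antisymm
    · rintro w ⟨z, hz, rfl⟩; exact hSrefl z hz
    · intro w hw
      exact ⟨k - w, hSrefl w hw, sub_sub_cancel k w⟩
  have hvolS : volume S = ENNReal.ofReal ((2:ℝ)⁻¹ ^ N) * volume B1 := by
    rw [hSdef, hB1, Measure.addHaar_ball volume _ (by norm_num : (0:ℝ) ≤ 2⁻¹),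
      finrank_euclideanSpace_fin]
  -- measurability helpers
  have hmz : ∀ c₁ c₂ : EuclideanSpace ℝ (Fin N),
      Measurable fun x => ENNReal.ofReal (‖v (x + c₁) - v (x + c₂)‖ ^ q / ε) := by
    intro c₁ c₂
    exact Measurable.ennreal_ofReal ((hrpow.comp
      (((hvm'.comp (measurable_add_const c₁)).sub (hvm'.comp (measurable_add_const c₂))).norm)).div_const ε)
  have hmz0 : ∀ c₁ : EuclideanSpace ℝ (Fin N), ∀ d : ℝ,
      Measurable fun x => ENNReal.ofReal (‖v (x + c₁) - v x‖ ^ q / d) := by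
    intro c₁ d
    exact Measurable.ennreal_ofReal ((hrpow.comp
      (((hvm'.comp (measurable_add_const c₁)).sub hvm').norm)).div_const d)
  have hmeas2 : Measurable fun p : (EuclideanSpace ℝ (Fin N)) × (EuclideanSpace ℝ (Fin N)) =>
      ENNReal.ofReal (‖v (p.2 + ε • k) - v (p.2 + ε • p.1)‖ ^ q / ε) := by
    apply Measurable.ennreal_ofReal
    apply Measurable.div_const
    apply hrpow.comp
    apply Measurable.norm
    exact (hvm'.comp (measurable_snd.add_const (ε • k))).sub
      (hvm'.comp (measurable_snd.add (measurable_fst.const_smul ε)))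
  have hmeas3 : Measurable fun p : (EuclideanSpace ℝ (Fin N)) × (EuclideanSpace ℝ (Fin N)) =>
      ENNReal.ofReal (‖v (p.2 + ε • p.1) - v p.2‖ ^ q / ε) := by
    apply Measurable.ennreal_ofReal
    apply Measurable.div_const
    apply hrpow.comp
    apply Measurable.norm
    exact (hvm'.comp (measurable_snd.add (measurable_fst.const_smul ε))).sub
      (hvm'.comp measurable_snd)
  have hGm : Measurable fun z => ∫⁻ x in closure Ω₁,
      ENNReal.ofReal (‖v (x + ε • k) - v (x + ε • z)‖ ^ q / ε) :=
    hmeas2.lintegral_prod_right'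
  have hBm : Measurable fun z => ∫⁻ x in closure Ω₁,
      ENNReal.ofReal (‖v (x + ε • z) - v x‖ ^ q / ε) :=
    hmeas3.lintegral_prod_right'
  set L : ℝ≥0∞ := ∫⁻ x in closure Ω₁, ENNReal.ofReal (‖v (x + ε • k) - v x‖ ^ q / ε) with hL
  set I : ℝ≥0∞ := ∫⁻ z in B1, ∫⁻ x in closure Ω₂,
      ENNReal.ofReal (‖v (x + ε • z) - v x‖ ^ q / (ε * ‖z‖)) with hI
  -- pointwise splitting inequality
  have hptwise : ∀ (z x : EuclideanSpace ℝ (Fin N)),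
      ENNReal.ofReal (‖v (x + ε • k) - v x‖ ^ q / ε) ≤
        ENNReal.ofReal (2 ^ (q-1)) * ENNReal.ofReal (‖v (x + ε • k) - v (x + ε • z)‖ ^ q / ε)
        + ENNReal.ofReal (2 ^ (q-1)) * ENNReal.ofReal (‖v (x + ε • z) - v x‖ ^ q / ε) := by
    intro z x
    set a := ‖v (x + ε • k) - v (x + ε • z)‖ with ha
    set b := ‖v (x + ε • z) - v x‖ with hb
    have htri : ‖v (x + ε • k) - v x‖ ≤ a + b := by
      calc ‖v (x + ε • k) - v x‖
          = ‖(v (x + ε • k) - v (x + ε • z)) + (v (x + ε • z) - v x)‖ := by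
            rw [sub_add_sub_cancel]
        _ ≤ a + b := norm_add_le _ _
    have h1 : ‖v (x + ε • k) - v x‖ ^ q ≤ 2 ^ (q-1) * (a ^ q + b ^ q) :=
      le_trans (Real.rpow_le_rpow (norm_nonneg _) htri hq0)
        (rpow_add_le_aux (norm_nonneg _) (norm_nonneg _) hq)
    have h2 : ‖v (x + ε • k) - v x‖ ^ q / ε ≤ 2 ^ (q-1) * (a ^ q / ε) + 2 ^ (q-1) * (b ^ q / ε) := by
      have heq : 2 ^ (q-1) * (a ^ q / ε) + 2 ^ (q-1) * (b ^ q / ε)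
          = 2 ^ (q-1) * (a ^ q + b ^ q) / ε := by ring
      rw [heq]
      gcongr
    calc ENNReal.ofReal (‖v (x + ε • k) - v x‖ ^ q / ε)
        ≤ ENNReal.ofReal (2 ^ (q-1) * (a ^ q / ε) + 2 ^ (q-1) * (b ^ q / ε)) :=
          ENNReal.ofReal_le_ofReal h2
      _ = _ := by
          rw [ENNReal.ofReal_add (by positivity) (by positivity),
            ENNReal.ofReal_mul (by positivity), ENNReal.ofReal_mul (by positivity)]
  -- step A : smuggle in the average over S
  have stepA : L * volume S ≤ ENNReal.ofReal (2 ^ (q-1)) *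
      ((∫⁻ z in S, ∫⁻ x in closure Ω₁,
          ENNReal.ofReal (‖v (x + ε • k) - v (x + ε • z)‖ ^ q / ε))
        + ∫⁻ z in S, ∫⁻ x in closure Ω₁,
          ENNReal.ofReal (‖v (x + ε • z) - v x‖ ^ q / ε)) := by
    rw [← setLIntegral_const S L]
    calc ∫⁻ _ in S, L
        ≤ ∫⁻ z in S, (ENNReal.ofReal (2 ^ (q-1)) * (∫⁻ x in closure Ω₁,
            ENNReal.ofReal (‖v (x + ε • k) - v (x + ε • z)‖ ^ q / ε))
          + ENNReal.ofReal (2 ^ (q-1)) * ∫⁻ x in closure Ω₁,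
            ENNReal.ofReal (‖v (x + ε • z) - v x‖ ^ q / ε)) := by
          apply lintegral_mono
          intro z
          calc L ≤ ∫⁻ x in closure Ω₁,
                (ENNReal.ofReal (2 ^ (q-1)) *
                    ENNReal.ofReal (‖v (x + ε • k) - v (x + ε • z)‖ ^ q / ε)
                  + ENNReal.ofReal (2 ^ (q-1)) *
                    ENNReal.ofReal (‖v (x + ε • z) - v x‖ ^ q / ε)) := by
                rw [hL]; exact lintegral_mono (hptwise z)
            _ = _ := by
                rw [lintegral_add_left ((hmz (ε • k) (ε • z)).const_mul _),
                  lintegral_const_mul _ (hmz (ε • k) (ε • z)),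
                  lintegral_const_mul _ (hmz0 (ε • z) ε)]
      _ = _ := by
          rw [lintegral_add_left (hGm.const_mul _),
            lintegral_const_mul _ hGm, lintegral_const_mul _ hBm, mul_add]
  -- the elementary division bound
  have hdivle : ∀ (z : EuclideanSpace ℝ (Fin N)), 0 < ‖z‖ → ‖z‖ < 1 → ∀ t : ℝ, 0 ≤ t →
      t / ε ≤ t / (ε * ‖z‖) := by
    intro z h0 h1 t ht
    have h2 : 0 < ε * ‖z‖ := by positivity
    apply div_le_div_of_nonneg_left ht h2
    nlinarith
  -- bound for the second term
  have hBle : (∫⁻ z in S, ∫⁻ x in closure Ω₁,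
      ENNReal.ofReal (‖v (x + ε • z) - v x‖ ^ q / ε)) ≤ I := by
    rw [hI]
    refine le_trans ?_ (lintegral_mono_set hSsub)
    apply lintegral_mono_ae
    filter_upwards [ae_restrict_mem hSm] with z hz
    obtain ⟨hz0, hz1⟩ := hSnorm z hz
    calc (∫⁻ x in closure Ω₁, ENNReal.ofReal (‖v (x + ε • z) - v x‖ ^ q / ε))
        ≤ ∫⁻ x in closure Ω₁, ENNReal.ofReal (‖v (x + ε • z) - v x‖ ^ q / (ε * ‖z‖)) := by
          apply lintegral_mono
          intro x
          exact ENNReal.ofReal_le_ofReal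
            (hdivle z hz0 hz1 _ (Real.rpow_nonneg (norm_nonneg _) q))
      _ ≤ _ := lintegral_mono_set (hΩ₁₂.trans subset_closure)
  -- bound for the first term : change of variables
  have hAle : (∫⁻ z in S, ∫⁻ x in closure Ω₁,
      ENNReal.ofReal (‖v (x + ε • k) - v (x + ε • z)‖ ^ q / ε)) ≤ I := by
    have step1 : ∀ z ∈ S, (∫⁻ x in closure Ω₁,
        ENNReal.ofReal (‖v (x + ε • k) - v (x + ε • z)‖ ^ q / ε))
        ≤ ∫⁻ y in closure Ω₂, ENNReal.ofReal (‖v (y + ε • (k - z)) - v y‖ ^ q / ε) := by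
      intro z hz
      have he : (∫⁻ x in closure Ω₁,
          ENNReal.ofReal (‖v (x + ε • k) - v (x + ε • z)‖ ^ q / ε))
          = ∫⁻ y in (fun x => x + ε • z) '' closure Ω₁,
            ENNReal.ofReal (‖v (y + ε • (k - z)) - v y‖ ^ q / ε) := by
        rw [← (measurePreserving_add_right volume (ε • z)).setLIntegral_comp_emb
          (Homeomorph.addRight (ε • z)).measurableEmbedding
          (fun y => ENNReal.ofReal (‖v (y + ε • (k - z)) - v y‖ ^ q / ε)) (closure Ω₁)]
        apply lintegral_congr
        intro x
        have h : x + ε • z + ε • (k - z) = x + ε • k := by module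
        rw [h]
      rw [he]
      apply lintegral_mono_set
      rintro y ⟨x, hx, rfl⟩
      exact subset_closure (key₁ x hx z (hSnorm z hz).2.le)
    calc (∫⁻ z in S, ∫⁻ x in closure Ω₁,
          ENNReal.ofReal (‖v (x + ε • k) - v (x + ε • z)‖ ^ q / ε))
        ≤ ∫⁻ z in S, ∫⁻ y in closure Ω₂,
            ENNReal.ofReal (‖v (y + ε • (k - z)) - v y‖ ^ q / ε) := by
          apply lintegral_mono_ae
          filter_upwards [ae_restrict_mem hSm] with z hz using step1 z hz
      _ = ∫⁻ w in (fun z => k - z) '' S, ∫⁻ y in closure Ω₂,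
            ENNReal.ofReal (‖v (y + ε • w) - v y‖ ^ q / ε) :=
          (Measure.measurePreserving_sub_left volume k).setLIntegral_comp_emb
            (Homeomorph.subLeft k).measurableEmbedding
            (fun w => ∫⁻ y in closure Ω₂,
              ENNReal.ofReal (‖v (y + ε • w) - v y‖ ^ q / ε)) S
      _ = ∫⁻ w in S, ∫⁻ y in closure Ω₂,
            ENNReal.ofReal (‖v (y + ε • w) - v y‖ ^ q / ε) := by rw [himg]
      _ ≤ ∫⁻ w in S, ∫⁻ y in closure Ω₂,
            ENNReal.ofReal (‖v (y + ε • w) - v y‖ ^ q / (ε * ‖w‖)) := by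
          apply lintegral_mono_ae
          filter_upwards [ae_restrict_mem hSm] with w hw
          obtain ⟨hw0, hw1⟩ := hSnorm w hw
          apply lintegral_mono
          intro y
          exact ENNReal.ofReal_le_ofReal
            (hdivle w hw0 hw1 _ (Real.rpow_nonneg (norm_nonneg _) q))
      _ ≤ I := by rw [hI]; exact lintegral_mono_set hSsub
  -- combine
  have main : L * volume S ≤ ENNReal.ofReal (2 ^ q) * I := by
    have h2q : (2:ℝ) ^ (q - 1) * 2 = 2 ^ q := by
      rw [Real.rpow_sub (by norm_num : (0:ℝ) < 2) q 1, Real.rpow_one]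
      field_simp
    calc L * volume S
        ≤ ENNReal.ofReal (2 ^ (q-1)) * (I + I) :=
          stepA.trans (mul_le_mul_right (add_le_add hAle hBle) _)
      _ = ENNReal.ofReal (2 ^ (q-1)) * 2 * I := by rw [← two_mul, ← mul_assoc]
      _ = ENNReal.ofReal (2 ^ q) * I := by
          rw [show (2:ℝ≥0∞) = ENNReal.ofReal 2 by simp,
            ← ENNReal.ofReal_mul (by positivity), h2q]
  -- final arithmetic
  have hμB0 : volume B1 ≠ 0 := (measure_ball_pos volume 0 one_pos).ne'
  have hμBt : volume B1 ≠ ⊤ := measure_ball_lt_top.ne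
  have hone : ENNReal.ofReal ((2:ℝ) ^ N) * ENNReal.ofReal ((2:ℝ)⁻¹ ^ N) = 1 := by
    rw [← ENNReal.ofReal_mul (by positivity), ← mul_pow]
    norm_num
  have hgoal : ENNReal.ofReal (2 ^ ((N:ℝ) + q)) / volume B1 * I
      = ENNReal.ofReal (2 ^ ((N:ℝ) + q)) * I / volume B1 := by
    rw [div_eq_mul_inv, div_eq_mul_inv, mul_right_comm]
  rw [hgoal, ENNReal.le_div_iff_mul_le (Or.inl hμB0) (Or.inl hμBt)]
  have key : L * volume B1 ≤ ENNReal.ofReal ((2:ℝ) ^ N) * (ENNReal.ofReal (2 ^ q) * I) := by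
    calc L * volume B1
        = ENNReal.ofReal ((2:ℝ) ^ N) * (L * volume S) := by
          rw [hvolS]
          calc L * volume B1
              = (ENNReal.ofReal ((2:ℝ) ^ N) * ENNReal.ofReal ((2:ℝ)⁻¹ ^ N)) * (L * volume B1) := by
                rw [hone, one_mul]
            _ = _ := by ring
      _ ≤ _ := mul_le_mul_right main _
  refine le_trans key (le_of_eq ?_)
  rw [← mul_assoc, ← ENNReal.ofReal_mul (by positivity),
    ← Real.rpow_natCast (2:ℝ) N, ← Real.rpow_add (by norm_num : (0:ℝ) < 2)]
end
end
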